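/- arXiv:2412.17196 — 4 statements merged into one kernel-verified Lean document; each statement's English description precedes it below -/
import Mathlib

section
/- Let f be a polynomial with real coefficients of degree d ≥ 1 such that f(x) > 0 for all real x ≥ 0, and let s ∈ ℂ. Then the double series Σ_{n,m≥1} (n · m^{d+1} · f(n/m))^{−s}, where each term is the principal complex power of a positive real number, is summable (absolutely convergent) if and only if Re(s) > 2/(d+2). -/
open Polynomial Filter Complex

lemma aux_lower (f : Polynomial ℝ) (d : ℕ) (hd : f.natDegree = d) (hd1 : 1 ≤ d)
    (hf : ∀ x : ℝ, 0 ≤ x → 0 < f.eval x) :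
    ∃ c : ℝ, 0 < c ∧ ∀ x : ℝ, 0 ≤ x → c * x ^ ((d : ℝ)/2) ≤ f.eval x := by
  have hf0 : f ≠ 0 := fun h => by simp [h] at hd; omega
  have hdeg : 0 < f.degree := natDegree_pos_iff_degree_pos.1 (by omega)
  have hlc : 0 < f.leadingCoeff := by
    by_contra h
    push_neg at h
    have := Polynomial.tendsto_atBot_of_leadingCoeff_nonpos f hdeg h
    obtain ⟨x, hx0, hx⟩ := ((this.eventually (eventually_lt_atBot (0:ℝ))).and
      (eventually_ge_atTop (0:ℝ))).exists
    exact absurd (hf x hx) (not_lt.2 hx0.le)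
  have hequiv := Polynomial.isEquivalent_atTop_lead (P := f)
  have hlittle := hequiv.isLittleO
  have hbound := hlittle.bound (by norm_num : (0:ℝ) < 1/2)
  rw [eventually_atTop] at hbound
  obtain ⟨N₀, hN₀⟩ := hbound
  set N := max N₀ 1 with hN
  have hN1 : (1:ℝ) ≤ N := le_max_right _ _
  have hN0 : (0:ℝ) < N := lt_of_lt_of_le one_pos hN1
  have hfar : ∀ x : ℝ, N ≤ x → f.leadingCoeff / 2 * x ^ ((d : ℝ)/2) ≤ f.eval x := by
    intro x hx
    have hx1 : (1:ℝ) ≤ x := hN1.trans hx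
    have hx0 : (0:ℝ) < x := lt_of_lt_of_le one_pos hx1
    have h1 := hN₀ x ((le_max_left _ _).trans hx)
    simp only [Pi.sub_apply] at h1
    have hxd : (0:ℝ) < x ^ f.natDegree := pow_pos hx0 _
    have h2 : ‖f.leadingCoeff * x ^ f.natDegree‖ = f.leadingCoeff * x ^ f.natDegree := by
      rw [Real.norm_eq_abs, abs_of_pos (mul_pos hlc hxd)]
    rw [h2] at h1
    have h3 : f.leadingCoeff / 2 * x ^ f.natDegree ≤ f.eval x := by
      rw [Real.norm_eq_abs] at h1
      have h4 := abs_le.1 h1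
      nlinarith [h4.1]
    have h5 : x ^ ((d:ℝ)/2) ≤ x ^ (d:ℝ) := by
      apply Real.rpow_le_rpow_of_exponent_le hx1
      have : (0:ℝ) ≤ (d:ℝ) := Nat.cast_nonneg d
      linarith
    calc f.leadingCoeff / 2 * x ^ ((d:ℝ)/2) ≤ f.leadingCoeff / 2 * x ^ (d:ℝ) := by
          apply mul_le_mul_of_nonneg_left h5 (by positivity)
      _ = f.leadingCoeff / 2 * x ^ f.natDegree := by rw [Real.rpow_natCast, hd]
      _ ≤ f.eval x := h3
  obtain ⟨x₀, hx₀mem, hx₀⟩ := isCompact_Icc.exists_isMinOn (Set.nonempty_Icc.2 hN0.le)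
    ((f.continuous_aeval).continuousOn (s := Set.Icc 0 N))
  have hμ : 0 < f.eval x₀ := hf x₀ hx₀mem.1
  refine ⟨min (f.leadingCoeff / 2) (f.eval x₀ / N ^ ((d:ℝ)/2)), by positivity, fun x hx => ?_⟩
  rcases le_or_gt x N with hxN | hxN
  · have h1 : x ^ ((d:ℝ)/2) ≤ N ^ ((d:ℝ)/2) := Real.rpow_le_rpow hx hxN (by positivity)
    calc min (f.leadingCoeff / 2) (f.eval x₀ / N ^ ((d:ℝ)/2)) * x ^ ((d:ℝ)/2)
        ≤ (f.eval x₀ / N ^ ((d:ℝ)/2)) * N ^ ((d:ℝ)/2) := by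
          apply mul_le_mul (min_le_right _ _) h1 (by positivity) (by positivity)
      _ = f.eval x₀ := div_mul_cancel₀ _ (by positivity)
      _ ≤ f.eval x := by
          have := hx₀ (Set.mem_Icc.2 ⟨hx, hxN⟩)
          simpa using this
  · calc min (f.leadingCoeff / 2) (f.eval x₀ / N ^ ((d:ℝ)/2)) * x ^ ((d:ℝ)/2)
        ≤ f.leadingCoeff / 2 * x ^ ((d:ℝ)/2) := by
          apply mul_le_mul_of_nonneg_right (min_le_left _ _) (by positivity)
      _ ≤ f.eval x := hfar x hxN.le

lemma aux_upper (f : Polynomial ℝ) (hf : ∀ x : ℝ, 0 ≤ x → 0 < f.eval x) :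
    ∃ C : ℝ, 0 < C ∧ ∀ x : ℝ, 0 ≤ x → x ≤ 3 → f.eval x ≤ C := by
  obtain ⟨x₁, hx₁mem, hx₁⟩ := isCompact_Icc.exists_isMaxOn
    (Set.nonempty_Icc.2 (by norm_num : (0:ℝ) ≤ 3))
    ((f.continuous_aeval).continuousOn (s := Set.Icc 0 3))
  exact ⟨f.eval x₁, hf x₁ hx₁mem.1, fun x hx hx3 => by simpa using hx₁ (Set.mem_Icc.2 ⟨hx, hx3⟩)⟩

lemma aux_conv (f : Polynomial ℝ) (d : ℕ) (hd : f.natDegree = d) (hd1 : 1 ≤ d)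
    (hf : ∀ x : ℝ, 0 ≤ x → 0 < f.eval x)
    (c : ℝ) (hc : 0 < c) (hcf : ∀ x : ℝ, 0 ≤ x → c * x ^ ((d : ℝ)/2) ≤ f.eval x)
    (σ : ℝ) (hσ : (2:ℝ)/(d+2) < σ) :
    Summable (fun p : ℕ × ℕ =>
      ((((p.1 : ℝ) + 1) * ((p.2 : ℝ) + 1) ^ (d + 1) *
        f.eval (((p.1 : ℝ) + 1) / ((p.2 : ℝ) + 1))) ^ (-σ))) := by
  have hd2 : (0:ℝ) < (d:ℝ) + 2 := by positivity
  have hσ0 : 0 < σ := lt_trans (div_pos two_pos hd2) hσ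
  set t : ℝ := ((d:ℝ)+2)/2 * σ with ht
  have ht1 : 1 < t := by
    rw [div_lt_iff₀ hd2] at hσ
    rw [ht]; nlinarith
  -- the majorant
  have hg : Summable (fun k : ℕ => ((k:ℝ)+1) ^ (-t)) := by
    have h1 : Summable (fun k : ℕ => ((k:ℝ)) ^ (-t)) := Real.summable_nat_rpow.2 (by linarith)
    have h2 := (summable_nat_add_iff (f := fun k : ℕ => ((k:ℝ)) ^ (-t)) 1).2 h1
    refine h2.congr fun k => ?_
    push_cast
    ring_nf
  have hgnn : ∀ k : ℕ, 0 ≤ ((k:ℝ)+1) ^ (-t) := fun k => Real.rpow_nonneg (by positivity) _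
  have hmaj : Summable (fun p : ℕ × ℕ =>
      c ^ (-σ) * (((p.1:ℝ)+1) ^ (-t) * ((p.2:ℝ)+1) ^ (-t))) :=
    (hg.mul_of_nonneg hg hgnn hgnn).mul_left _
  refine Summable.of_nonneg_of_le (fun p => Real.rpow_nonneg ?_ _) (fun p => ?_) hmaj
  · have hn : (0:ℝ) < (p.1:ℝ)+1 := by positivity
    have hm : (0:ℝ) < (p.2:ℝ)+1 := by positivity
    have := hf _ (div_nonneg hn.le hm.le)
    positivity
  · set n : ℝ := (p.1:ℝ)+1 with hn'
    set m : ℝ := (p.2:ℝ)+1 with hm'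
    have hn : (0:ℝ) < n := by rw [hn']; positivity
    have hm : (0:ℝ) < m := by rw [hm']; positivity
    have hfe := hf _ (div_nonneg hn.le hm.le)
    -- key lower bound on the base
    have hlow : c * (n*m) ^ (((d:ℝ)+2)/2) ≤ n * m ^ (d+1) * f.eval (n/m) := by
      have h1 : c * (n/m) ^ ((d:ℝ)/2) ≤ f.eval (n/m) := hcf _ (div_nonneg hn.le hm.le)
      have h2 : n * m ^ (d+1) * (c * (n/m) ^ ((d:ℝ)/2)) ≤ n * m ^ (d+1) * f.eval (n/m) := by
        apply mul_le_mul_of_nonneg_left h1 (by positivity)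
      refine le_trans (le_of_eq ?_) h2
      have e1 : (n/m) ^ ((d:ℝ)/2) = n ^ ((d:ℝ)/2) * m ^ (-((d:ℝ)/2)) := by
        rw [Real.div_rpow hn.le hm.le, Real.rpow_neg hm.le, div_eq_mul_inv]
      have e2 : m ^ (d+1) = (m : ℝ) ^ ((d:ℝ)+1) := by
        rw [← Real.rpow_natCast m (d+1)]; push_cast; ring_nf
      calc c * (n*m) ^ (((d:ℝ)+2)/2)
          = c * n ^ (((d:ℝ)+2)/2) * m ^ (((d:ℝ)+2)/2) := by
            rw [Real.mul_rpow hn.le hm.le]; ring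
        _ = c * n ^ ((1:ℝ)+(d:ℝ)/2) * m ^ (((d:ℝ)+1)+(-((d:ℝ)/2))) := by
            rw [show (1:ℝ)+(d:ℝ)/2 = ((d:ℝ)+2)/2 by ring,
              show ((d:ℝ)+1)+(-((d:ℝ)/2)) = ((d:ℝ)+2)/2 by ring]
        _ = c * (n ^ (1:ℝ) * n ^ ((d:ℝ)/2)) * (m ^ ((d:ℝ)+1) * m ^ (-((d:ℝ)/2))) := by
            rw [← Real.rpow_add hn, ← Real.rpow_add hm]
        _ = n * m ^ (d+1) * (c * (n/m) ^ ((d:ℝ)/2)) := by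
            rw [e1, e2, Real.rpow_one]; ring
    have hbasepos : (0:ℝ) < c * (n*m) ^ (((d:ℝ)+2)/2) := by positivity
    calc (n * m ^ (d+1) * f.eval (n/m)) ^ (-σ)
        ≤ (c * (n*m) ^ (((d:ℝ)+2)/2)) ^ (-σ) :=
          Real.rpow_le_rpow_of_nonpos hbasepos hlow (by linarith)
      _ = c ^ (-σ) * (n ^ (-t) * m ^ (-t)) := by
          rw [Real.mul_rpow hc.le (Real.rpow_nonneg (by positivity) _),
            ← Real.rpow_mul (by positivity : (0:ℝ) ≤ n*m),
            show ((d:ℝ)+2)/2 * (-σ) = -t by rw [ht]; ring,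
            Real.rpow_neg (by positivity : (0:ℝ) ≤ n*m),
            Real.mul_rpow hn.le hm.le, Real.rpow_neg hn.le, Real.rpow_neg hm.le,
            mul_inv]

lemma aux_div (f : Polynomial ℝ) (d : ℕ) (hd : f.natDegree = d) (hd1 : 1 ≤ d)
    (hf : ∀ x : ℝ, 0 ≤ x → 0 < f.eval x)
    (c : ℝ) (hc : 0 < c) (hcf : ∀ x : ℝ, 0 ≤ x → c * x ^ ((d : ℝ)/2) ≤ f.eval x)
    (C : ℝ) (hC : 0 < C) (hCf : ∀ x : ℝ, 0 ≤ x → x ≤ 3 → f.eval x ≤ C)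
    (σ : ℝ) (hσle : σ ≤ 2/((d:ℝ)+2)) :
    ¬ Summable (fun p : ℕ × ℕ =>
      ((((p.1 : ℝ) + 1) * ((p.2 : ℝ) + 1) ^ (d + 1) *
        f.eval (((p.1 : ℝ) + 1) / ((p.2 : ℝ) + 1))) ^ (-σ))) := by
  intro hsum
  have hd2 : (0:ℝ) < (d:ℝ) + 2 := by positivity
  have hApos : ∀ p : ℕ × ℕ, 0 < (((p.1 : ℝ) + 1) * ((p.2 : ℝ) + 1) ^ (d + 1) *
      f.eval (((p.1 : ℝ) + 1) / ((p.2 : ℝ) + 1))) := by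
    intro p
    have hn : (0:ℝ) < (p.1:ℝ)+1 := by positivity
    have hm : (0:ℝ) < (p.2:ℝ)+1 := by positivity
    have := hf _ (div_nonneg hn.le hm.le)
    positivity
  rcases le_or_gt σ 0 with h0 | h0
  · -- σ ≤ 0 : terms eventually ≥ 1
    have hinj : Function.Injective (fun k : ℕ => ((k, 0) : ℕ × ℕ)) := by
      intro a b hab; simpa using hab
    have hten := (hsum.tendsto_cofinite_zero.comp hinj.tendsto_cofinite)
    rw [Nat.cofinite_eq_atTop] at hten
    have hev := hten.eventually_lt_const (by norm_num : (0:ℝ) < 1)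
    have hev2 : ∀ᶠ k : ℕ in atTop, 1/c ≤ (k:ℝ) :=
      tendsto_natCast_atTop_atTop.eventually_ge_atTop (1/c)
    obtain ⟨k, hk1, hk2⟩ := (hev.and hev2).exists
    simp only [Function.comp_apply, Nat.cast_zero, zero_add, one_pow, mul_one, div_one] at hk1
    have hm1 : (1:ℝ) ≤ (k:ℝ)+1 := by
      have := Nat.cast_nonneg (α := ℝ) k; linarith
    have hone : (1:ℝ) ≤ ((k:ℝ)+1) ^ ((d:ℝ)/2) := by
      calc (1:ℝ) = ((k:ℝ)+1) ^ (0:ℝ) := (Real.rpow_zero _).symm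
        _ ≤ _ := Real.rpow_le_rpow_of_exponent_le hm1 (by positivity)
    have hfk : c ≤ f.eval ((k:ℝ)+1) := by
      calc c = c * 1 := (mul_one c).symm
        _ ≤ c * ((k:ℝ)+1) ^ ((d:ℝ)/2) := by nlinarith
        _ ≤ f.eval ((k:ℝ)+1) := hcf _ (by linarith)
    have hA1 : (1:ℝ) ≤ ((k:ℝ)+1) * f.eval ((k:ℝ)+1) := by
      have h9 : (1:ℝ) ≤ ((k:ℝ)+1) * c := by
        nlinarith [mul_le_mul_of_nonneg_right hk2 hc.le, one_div_mul_cancel hc.ne']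
      calc (1:ℝ) ≤ ((k:ℝ)+1) * c := h9
        _ ≤ ((k:ℝ)+1) * f.eval ((k:ℝ)+1) := by
            apply mul_le_mul_of_nonneg_left hfk (by linarith)
    have hfin : (1:ℝ) ≤ (((k:ℝ)+1) * f.eval ((k:ℝ)+1)) ^ (-σ) := by
      calc (1:ℝ) = (((k:ℝ)+1) * f.eval ((k:ℝ)+1)) ^ (0:ℝ) := (Real.rpow_zero _).symm
        _ ≤ _ := Real.rpow_le_rpow_of_exponent_le hA1 (by linarith)
    linarith
  · -- 0 < σ
    have h2 : ((d:ℝ)+2)*σ ≤ 2 := by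
      rw [le_div_iff₀ hd2] at hσle; linarith
    have hnn : ∀ p : ℕ × ℕ, (0:ℝ) ≤ (((p.1 : ℝ) + 1) * ((p.2 : ℝ) + 1) ^ (d + 1) *
        f.eval (((p.1 : ℝ) + 1) / ((p.2 : ℝ) + 1))) ^ (-σ) :=
      fun p => Real.rpow_nonneg (hApos p).le _
    have hswap : Summable (fun p : ℕ × ℕ =>
        ((((p.2 : ℝ) + 1) * ((p.1 : ℝ) + 1) ^ (d + 1) *
          f.eval (((p.2 : ℝ) + 1) / ((p.1 : ℝ) + 1))) ^ (-σ))) :=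
      ((Equiv.prodComm ℕ ℕ).summable_iff).2 hsum
    obtain ⟨hslice, htsum⟩ := (summable_prod_of_nonneg (fun p => hnn (p.2, p.1))).1 hswap
    -- htsum : Summable fun k => ∑' j, (term with n-index j, m-index k)
    have hDpos : (0:ℝ) < (2*C) ^ (-σ) := Real.rpow_pos_of_pos (by positivity) _
    have hlb : ∀ k : ℕ, (2*C) ^ (-σ) * ((k:ℝ)+1) ^ (-(1:ℝ)) ≤
        ∑' j : ℕ, ((((j : ℝ) + 1) * ((k : ℝ) + 1) ^ (d + 1) *
          f.eval (((j : ℝ) + 1) / ((k : ℝ) + 1))) ^ (-σ)) := by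
      intro k
      have hm : (0:ℝ) < (k:ℝ)+1 := by positivity
      have hm1 : (1:ℝ) ≤ (k:ℝ)+1 := by
        have := Nat.cast_nonneg (α := ℝ) k; linarith
      have hterm : ∀ j ∈ Finset.Ico k (2*k+1),
          (2*C) ^ (-σ) * ((k:ℝ)+1) ^ (-(((d:ℝ)+2)*σ)) ≤
          ((((j : ℝ) + 1) * ((k : ℝ) + 1) ^ (d + 1) *
            f.eval (((j : ℝ) + 1) / ((k : ℝ) + 1))) ^ (-σ)) := by
        intro j hj
        rw [Finset.mem_Ico] at hj
        have hjk : (j:ℝ) + 1 ≤ 2*((k:ℝ)+1) := by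
          have : (j:ℝ) ≤ 2*(k:ℝ) := by exact_mod_cast Nat.lt_succ_iff.1 hj.2
          linarith
        have hx0 : (0:ℝ) ≤ ((j:ℝ)+1) / ((k:ℝ)+1) := by positivity
        have hx3 : ((j:ℝ)+1) / ((k:ℝ)+1) ≤ 3 := by
          rw [div_le_iff₀ hm]; linarith
        have hub : (((j : ℝ) + 1) * ((k : ℝ) + 1) ^ (d + 1) *
            f.eval (((j : ℝ) + 1) / ((k : ℝ) + 1))) ≤ 2*C*((k:ℝ)+1)^(d+2) := by
          have h5 := hCf _ hx0 hx3
          have h6 : (0:ℝ) < ((k:ℝ)+1)^(d+1) := by positivity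
          have h7 : ((k:ℝ)+1)^(d+2) = ((k:ℝ)+1) * ((k:ℝ)+1)^(d+1) := by ring
          rw [h7]
          have h8 : (0:ℝ) < f.eval (((j : ℝ) + 1) / ((k : ℝ) + 1)) := hf _ hx0
          calc ((j : ℝ) + 1) * ((k : ℝ) + 1) ^ (d + 1) * f.eval (((j : ℝ) + 1) / ((k : ℝ) + 1))
              ≤ (2*((k:ℝ)+1)) * ((k : ℝ) + 1) ^ (d + 1) * f.eval (((j : ℝ) + 1) / ((k : ℝ) + 1)) := by
                apply mul_le_mul_of_nonneg_right (mul_le_mul_of_nonneg_right hjk h6.le) h8.le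
            _ ≤ (2*((k:ℝ)+1)) * ((k : ℝ) + 1) ^ (d + 1) * C := by
                apply mul_le_mul_of_nonneg_left h5 (by positivity)
            _ = 2*C*(((k:ℝ)+1) * ((k:ℝ)+1)^(d+1)) := by ring
        calc (2*C) ^ (-σ) * ((k:ℝ)+1) ^ (-(((d:ℝ)+2)*σ))
            = (2*C*((k:ℝ)+1)^(d+2)) ^ (-σ) := by
              conv_rhs => rw [Real.mul_rpow (by positivity) (by positivity),
                ← Real.rpow_natCast ((k:ℝ)+1) (d+2),
                ← Real.rpow_mul (by positivity : (0:ℝ) ≤ (k:ℝ)+1)]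
              congr 1
              push_cast
              ring
          _ ≤ _ := Real.rpow_le_rpow_of_nonpos (hApos (j,k)) hub (by linarith)
      have hcard : (Finset.Ico k (2*k+1)).card = k+1 := by
        rw [Nat.card_Ico]; omega
      have hsum1 := Finset.card_nsmul_le_sum (Finset.Ico k (2*k+1)) _ _ hterm
      rw [hcard] at hsum1
      have hsum2 : (((k:ℕ)+1 : ℕ) : ℝ) * ((2*C) ^ (-σ) * ((k:ℝ)+1) ^ (-(((d:ℝ)+2)*σ))) ≤
          ∑ j ∈ Finset.Ico k (2*k+1), ((((j : ℝ) + 1) * ((k : ℝ) + 1) ^ (d + 1) *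
            f.eval (((j : ℝ) + 1) / ((k : ℝ) + 1))) ^ (-σ)) := by
        rw [← nsmul_eq_mul]; exact_mod_cast hsum1
      have hsum3 := Summable.sum_le_tsum (Finset.Ico k (2*k+1))
        (fun j _ => hnn (j, k)) (hslice k)
      refine le_trans ?_ (hsum2.trans hsum3)
      push_cast
      rw [show ((k:ℝ)+1) * ((2*C) ^ (-σ) * ((k:ℝ)+1) ^ (-(((d:ℝ)+2)*σ))) =
        (2*C) ^ (-σ) * (((k:ℝ)+1) ^ (1:ℝ) * ((k:ℝ)+1) ^ (-(((d:ℝ)+2)*σ))) by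
          rw [Real.rpow_one]; ring,
        ← Real.rpow_add hm]
      apply mul_le_mul_of_nonneg_left _ hDpos.le
      apply Real.rpow_le_rpow_of_exponent_le hm1
      linarith
    have hs2 : Summable (fun k : ℕ => (2*C) ^ (-σ) * ((k:ℝ)+1) ^ (-(1:ℝ))) :=
      Summable.of_nonneg_of_le (fun k => by positivity) hlb htsum
    have hs3 : Summable (fun k : ℕ => ((k:ℝ)+1) ^ (-(1:ℝ))) :=
      (summable_mul_left_iff hDpos.ne').1 hs2
    have hs4 : Summable (fun k : ℕ => ((k:ℝ)) ^ (-(1:ℝ))) := by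
      rw [← summable_nat_add_iff 1]
      refine hs3.congr fun k => ?_
      push_cast
      ring_nf
    have := Real.summable_nat_rpow.1 hs4
    norm_num at this

/-- The double series `Σ_{n,m ≥ 1} (n · m^(d+1) · f(n/m))^(-s)` is summable
if and only if `Re(s) > 2/(d+2)`. -/
theorem stmt0 (f : Polynomial ℝ) (d : ℕ) (hd : f.natDegree = d) (hd1 : 1 ≤ d)
    (hf : ∀ x : ℝ, 0 ≤ x → 0 < f.eval x) (s : ℂ) :
    Summable (fun p : ℕ × ℕ =>
      ((((p.1 : ℝ) + 1) * ((p.2 : ℝ) + 1) ^ (d + 1) *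
        f.eval (((p.1 : ℝ) + 1) / ((p.2 : ℝ) + 1)) : ℝ) : ℂ) ^ (-s)) ↔
      (2 : ℝ) / (d + 2) < s.re := by
  have hApos : ∀ p : ℕ × ℕ, 0 < (((p.1 : ℝ) + 1) * ((p.2 : ℝ) + 1) ^ (d + 1) *
      f.eval (((p.1 : ℝ) + 1) / ((p.2 : ℝ) + 1))) := by
    intro p
    have hn : (0:ℝ) < (p.1:ℝ)+1 := by positivity
    have hm : (0:ℝ) < (p.2:ℝ)+1 := by positivity
    have := hf _ (div_nonneg hn.le hm.le)
    positivity
  obtain ⟨c, hc, hcf⟩ := aux_lower f d hd hd1 hf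
  obtain ⟨C, hC, hCf⟩ := aux_upper f hf
  rw [← summable_norm_iff]
  have heq : (fun p : ℕ × ℕ =>
      ‖(((((p.1 : ℝ) + 1) * ((p.2 : ℝ) + 1) ^ (d + 1) *
        f.eval (((p.1 : ℝ) + 1) / ((p.2 : ℝ) + 1)) : ℝ) : ℂ) ^ (-s))‖) =
      fun p : ℕ × ℕ => ((((p.1 : ℝ) + 1) * ((p.2 : ℝ) + 1) ^ (d + 1) *
        f.eval (((p.1 : ℝ) + 1) / ((p.2 : ℝ) + 1))) ^ (-s.re)) := by
    funext p
    rw [Complex.norm_cpow_eq_rpow_re_of_pos (hApos p), Complex.neg_re]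
  rw [heq]
  constructor
  · intro hsum
    by_contra hσ
    push_neg at hσ
    exact aux_div f d hd hd1 hf c hc hcf C hC hCf s.re hσ hsum
  · intro hσ
    exact aux_conv f d hd hd1 hf c hc hcf s.re hσ
end

section
/- Let f be a polynomial with real coefficients of degree d ≥ 1 such that f(x) > 0 for all real x ≥ 0, and assume in addition that all complex roots of f are real (hence negative). Then for every a ∈ ℂ, every ε with 0 < ε < π, and all real numbers σ₁, σ₂ with 0 < σ₁ ≤ σ₂ < d·Re(a), there exists a constant C > 0 such that for all σ ∈ [σ₁, σ₂] and all real t with |t| ≥ 1, ‖∫_0^∞ f(x)^{−a} x^{σ + it − 1} dx‖ ≤ C · exp(−(π − ε)·|t|). -/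
open Complex Polynomial MeasureTheory Set Filter

noncomputable def Hfun (c : ℝ) (R : Multiset ℝ) (a : ℂ) (z : ℂ) : ℂ :=
  (c : ℂ) ^ (-a) * (R.map fun r : ℝ => (z - (r : ℂ)) ^ (-a)).prod

lemma exp_sub_mem_slitPlane {w : ℂ} (hw : |w.im| < Real.pi) {r : ℝ} (hr : r < 0) :
    Complex.exp w - (r : ℂ) ∈ Complex.slitPlane := by
  rcases eq_or_ne w.im 0 with h0 | h0
  · refine Or.inl ?_
    simp only [Complex.sub_re, Complex.exp_re, h0, Real.cos_zero, mul_one, Complex.ofReal_re]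
    have := Real.exp_pos w.re
    linarith
  · refine Or.inr ?_
    simp only [Complex.sub_im, Complex.exp_im, Complex.ofReal_im, sub_zero]
    have hs : Real.sin w.im ≠ 0 := by
      rcases lt_or_gt_of_ne h0 with h | h
      · have : 0 < Real.sin (-w.im) := Real.sin_pos_of_pos_of_lt_pi (by linarith)
          (by rw [abs_of_neg h] at hw; linarith)
        rw [Real.sin_neg] at this; linarith
      · have : 0 < Real.sin w.im := Real.sin_pos_of_pos_of_lt_pi h
          (by rw [abs_of_pos h] at hw; linarith)
        linarith
    positivity

lemma multiset_map_prod_nonneg {α : Type*} (m : Multiset α) (g : α → ℝ)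
    (hg : ∀ r ∈ m, 0 ≤ g r) : 0 ≤ (m.map g).prod :=
  Multiset.prod_nonneg (by intro x hx; obtain ⟨r, hr, rfl⟩ := Multiset.mem_map.mp hx; exact hg r hr)

lemma multiset_map_prod_pos {α : Type*} (m : Multiset α) (g : α → ℝ)
    (hg : ∀ r ∈ m, 0 < g r) : 0 < (m.map g).prod := by
  induction m using Multiset.induction_on with
  | empty => simp
  | cons r m ih =>
    simp only [Multiset.map_cons, Multiset.prod_cons]
    exact mul_pos (hg r (Multiset.mem_cons_self _ _))
      (ih fun x hx => hg x (Multiset.mem_cons_of_mem hx))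

lemma multiset_map_prod_le {α : Type*} (m : Multiset α) (g h : α → ℝ)
    (hg : ∀ r ∈ m, 0 ≤ g r) (hgh : ∀ r ∈ m, g r ≤ h r) :
    (m.map g).prod ≤ (m.map h).prod := by
  induction m using Multiset.induction_on with
  | empty => simp
  | cons r m ih =>
    simp only [Multiset.map_cons, Multiset.prod_cons]
    have hgm : ∀ x ∈ m, 0 ≤ g x := fun x hx => hg x (Multiset.mem_cons_of_mem hx)
    refine mul_le_mul (hgh r (Multiset.mem_cons_self _ _))
      (ih hgm fun x hx => hgh x (Multiset.mem_cons_of_mem hx))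
      (multiset_map_prod_nonneg m g hgm)
      (le_trans (hg r (Multiset.mem_cons_self _ _)) (hgh r (Multiset.mem_cons_self _ _)))

lemma multiset_cpow_prod {m : Multiset ℝ} {g : ℝ → ℝ} (hg : ∀ r ∈ m, 0 < g r) (a : ℂ) :
    (((m.map g).prod : ℝ) : ℂ) ^ a = (m.map fun r => ((g r : ℝ) : ℂ) ^ a).prod := by
  induction m using Multiset.induction_on with
  | empty => simp
  | cons r m ih =>
    simp only [Multiset.map_cons, Multiset.prod_cons, Complex.ofReal_mul]
    rw [← ih fun x hx => hg x (Multiset.mem_cons_of_mem hx)]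
    rw [← Complex.mul_cpow_ofReal_nonneg (hg r (Multiset.mem_cons_self _ _)).le
      (multiset_map_prod_nonneg m g fun x hx => (hg x (Multiset.mem_cons_of_mem hx)).le)]

lemma norm_multiset_map_prod {α : Type*} (m : Multiset α) (g : α → ℂ) :
    ‖(m.map g).prod‖ = (m.map fun r => ‖g r‖).prod := by
  induction m using Multiset.induction_on with
  | empty => simp
  | cons r m ih => simp [Multiset.map_cons, Multiset.prod_cons, norm_mul, ih]

set_option maxHeartbeats 1000000 in
/-- Lower bound on the distance from a point on the ray of angle `y` to a negative real. -/
lemma dist_lower_bound {ε : ℝ} (hε : 0 < ε) (hεπ : ε < Real.pi)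
    {u y r : ℝ} (hr : r < 0) (hy : |y| ≤ Real.pi - ε) :
    Real.sqrt ((1 - Real.cos ε) / 2) * max (Real.exp u) (-r) ≤
      ‖Complex.exp ((u : ℂ) + (y : ℂ) * Complex.I) - (r : ℂ)‖ := by
  have hcos : Real.cos ε < 1 := by
    have := Real.cos_lt_cos_of_nonneg_of_le_pi (le_refl 0) hεπ.le hε
    simpa using this
  set δ2 : ℝ := (1 - Real.cos ε) / 2 with hδ2
  have hδ2pos : 0 < δ2 := by simp only [hδ2]; linarith
  set E := Real.exp u with hE
  have hEpos : 0 < E := Real.exp_pos u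
  set ρ := -r with hρ
  have hρpos : 0 < ρ := by linarith
  -- real and imaginary parts
  have hre : (Complex.exp ((u : ℂ) + (y : ℂ) * Complex.I) - (r : ℂ)).re
      = E * Real.cos y + ρ := by
    simp [Complex.sub_re, Complex.exp_re, hE, hρ]; ring
  have him : (Complex.exp ((u : ℂ) + (y : ℂ) * Complex.I) - (r : ℂ)).im
      = E * Real.sin y := by
    simp [Complex.sub_im, Complex.exp_im, hE]
  -- cos y ≥ cos (π - ε)
  have hcosy : Real.cos (Real.pi - ε) ≤ Real.cos y := by
    rw [← Real.cos_abs y]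
    exact Real.cos_le_cos_of_nonneg_of_le_pi (abs_nonneg y) (by linarith) hy
  have hcospi : Real.cos (Real.pi - ε) = -Real.cos ε := Real.cos_pi_sub ε
  -- compare squares
  have hmaxnn : 0 ≤ max E ρ := le_max_of_le_left hEpos.le
  rw [← Real.sqrt_sq hmaxnn, ← Real.sqrt_mul hδ2pos.le,
    ← Real.sqrt_sq (norm_nonneg (Complex.exp ((u : ℂ) + (y : ℂ) * Complex.I) - (r : ℂ)))]
  refine Real.sqrt_le_sqrt ?_
  have habs : (‖Complex.exp ((u : ℂ) + (y : ℂ) * Complex.I) - (r : ℂ)‖) ^ 2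
      = (E * Real.cos y + ρ) ^ 2 + (E * Real.sin y) ^ 2 := by
    rw [Complex.sq_norm, Complex.normSq_apply, hre, him]; ring
  rw [habs]
  have hsc : Real.sin y ^ 2 + Real.cos y ^ 2 = 1 := Real.sin_sq_add_cos_sq y
  have hmax : max E ρ ^ 2 ≤ (E + ρ)^2 := by
    have h1 : max E ρ ≤ E + ρ := max_le (by linarith) (by linarith)
    have h2 : 0 ≤ max E ρ := le_max_of_le_left hEpos.le
    nlinarith
  have hkey : δ2 * (E + ρ) ^ 2 ≤ (E * Real.cos y + ρ) ^ 2 + (E * Real.sin y) ^ 2 := by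
    have hC : -Real.cos ε ≤ Real.cos y := by rw [← hcospi]; exact hcosy
    have expand : (E * Real.cos y + ρ) ^ 2 + (E * Real.sin y) ^ 2
        = E^2 + ρ^2 + 2 * E * ρ * Real.cos y := by nlinarith [hsc]
    rw [expand]
    have hcge : -1 ≤ Real.cos ε := Real.neg_one_le_cos ε
    nlinarith [mul_nonneg (by linarith : (0:ℝ) ≤ 1 + Real.cos ε) (sq_nonneg (E - ρ)),
      mul_nonneg (mul_pos hEpos hρpos).le (by linarith : (0:ℝ) ≤ Real.cos y + Real.cos ε)]
  calc δ2 * max E ρ ^ 2 ≤ δ2 * (E + ρ)^2 := by nlinarith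
    _ ≤ _ := hkey

lemma Hfun_bound (c : ℝ) (hc : 0 < c) (R : Multiset ℝ) (hR : ∀ r ∈ R, r < 0)
    (a : ℂ) (ha : 0 ≤ a.re) {ε : ℝ} (hε : 0 < ε) (hεπ : ε < Real.pi) :
    ∃ K : ℝ, 0 < K ∧ ∀ u y : ℝ, |y| ≤ Real.pi - ε →
      ‖Hfun c R a (Complex.exp ((u : ℂ) + (y : ℂ) * Complex.I))‖ ≤
        K * min 1 (Real.exp (-((Multiset.card R : ℝ) * a.re) * u)) := by
  have hcos : Real.cos ε < 1 := by
    have := Real.cos_lt_cos_of_nonneg_of_le_pi (le_refl 0) hεπ.le hε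
    simpa using this
  set δ := Real.sqrt ((1 - Real.cos ε) / 2) with hδdef
  have hδ : 0 < δ := Real.sqrt_pos.mpr (by linarith)
  set β := Real.exp (Real.pi * |a.im|) * δ ^ (-a.re) with hβ
  have hβpos : 0 < β := by positivity
  set P := (R.map fun r => β * (-r) ^ (-a.re)).prod with hP
  have hPpos : 0 < P := multiset_map_prod_pos _ _ (fun r hr => by
    have : 0 < -r := by linarith [hR r hr]
    positivity)
  have hcne : ((c : ℂ)) ^ (-a) ≠ 0 := by
    rw [Ne, Complex.cpow_eq_zero_iff, not_and_or]
    exact Or.inl (by exact_mod_cast hc.ne')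
  have hcpos : 0 < ‖(c : ℂ) ^ (-a)‖ := norm_pos_iff.mpr hcne
  refine ⟨‖(c : ℂ) ^ (-a)‖ * max P (β ^ Multiset.card R), by positivity, fun u y hy => ?_⟩
  set z := Complex.exp ((u : ℂ) + (y : ℂ) * Complex.I) with hz
  -- per-factor bound
  have hfac : ∀ r ∈ R, ‖(z - (r : ℂ)) ^ (-a)‖ ≤
      β * min ((-r) ^ (-a.re)) (Real.exp (-a.re * u)) := by
    intro r hr
    have hrneg : r < 0 := hR r hr
    have hdist := dist_lower_bound (u := u) hε hεπ hrneg hy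
    have hmaxpos : 0 < max (Real.exp u) (-r) := lt_max_of_lt_left (Real.exp_pos u)
    have habspos : 0 < ‖z - (r : ℂ)‖ := lt_of_lt_of_le (mul_pos hδ hmaxpos) hdist
    have hzne : z - (r : ℂ) ≠ 0 := by
      intro h; rw [h] at habspos; simp at habspos
    rw [Complex.norm_cpow_of_ne_zero hzne]
    have hexp : Real.exp (Complex.arg (z - (r : ℂ)) * (-a).im) ≠ 0 := Real.exp_ne_zero _
    rw [div_eq_mul_inv, ← Real.exp_neg]
    have h1 : ‖z - (r : ℂ)‖ ^ (-a).re ≤ (δ * max (Real.exp u) (-r)) ^ (-a.re) := by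
      simp only [Complex.neg_re]
      exact Real.rpow_le_rpow_of_nonpos (by positivity) hdist (by linarith)
    have h2 : Real.exp (-(Complex.arg (z - (r : ℂ)) * (-a).im)) ≤ Real.exp (Real.pi * |a.im|) := by
      apply Real.exp_le_exp.mpr
      have := Complex.abs_arg_le_pi (z - (r : ℂ))
      calc -(Complex.arg (z - (r : ℂ)) * (-a).im) = Complex.arg (z - (r : ℂ)) * a.im := by
            first
          | (simp [Complex.neg_im]; ring)
          | simp [Complex.neg_im]
          | (simp only [Complex.neg_im]; ring)
        _ ≤ |Complex.arg (z - (r : ℂ)) * a.im| := le_abs_self _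
        _ = |Complex.arg (z - (r : ℂ))| * |a.im| := abs_mul _ _
        _ ≤ Real.pi * |a.im| := by
            apply mul_le_mul_of_nonneg_right this (abs_nonneg _)
    calc ‖z - (r : ℂ)‖ ^ (-a).re * Real.exp (-(Complex.arg (z - (r : ℂ)) * (-a).im))
        ≤ (δ * max (Real.exp u) (-r)) ^ (-a.re) * Real.exp (Real.pi * |a.im|) := by
          apply mul_le_mul h1 h2 (Real.exp_pos _).le (by positivity)
      _ = β * (max (Real.exp u) (-r)) ^ (-a.re) := by
          rw [Real.mul_rpow hδ.le hmaxpos.le, hβ]; ring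
      _ ≤ β * min ((-r) ^ (-a.re)) (Real.exp (-a.re * u)) := by
          apply mul_le_mul_of_nonneg_left _ hβpos.le
          apply le_min
          · exact Real.rpow_le_rpow_of_nonpos (by linarith [hR r hr]) (le_max_right _ _)
              (by linarith)
          · rw [show Real.exp (-a.re * u) = Real.exp u ^ (-a.re) by
              rw [← Real.exp_mul]; ring_nf]
            exact Real.rpow_le_rpow_of_nonpos (Real.exp_pos u) (le_max_left _ _) (by linarith)
  -- norm of the product
  have hnorm : ‖Hfun c R a z‖
      = ‖(c : ℂ) ^ (-a)‖ * (R.map fun r : ℝ => ‖(z - (r : ℂ)) ^ (-a)‖).prod := by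
    rw [Hfun, norm_mul, norm_multiset_map_prod R (fun r : ℝ => (z - (r : ℂ)) ^ (-a))]
  have hb1 : (R.map fun r : ℝ => ‖(z - (r : ℂ)) ^ (-a)‖).prod ≤ P := by
    apply multiset_map_prod_le _ _ _ (fun r _ => norm_nonneg _)
    intro r hr
    refine (hfac r hr).trans ?_
    exact mul_le_mul_of_nonneg_left (min_le_left _ _) hβpos.le
  have hb2 : (R.map fun r : ℝ => ‖(z - (r : ℂ)) ^ (-a)‖).prod ≤
      β ^ Multiset.card R * Real.exp (-((Multiset.card R : ℝ) * a.re) * u) := by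
    have := multiset_map_prod_le R (fun r : ℝ => ‖(z - (r : ℂ)) ^ (-a)‖)
      (fun _ => β * Real.exp (-a.re * u)) (fun r _ => norm_nonneg _)
      (fun r hr => (hfac r hr).trans
        (mul_le_mul_of_nonneg_left (min_le_right _ _) hβpos.le))
    rw [Multiset.map_const', Multiset.prod_replicate, mul_pow] at this
    refine this.trans (le_of_eq ?_)
    congr 1
    rw [← Real.exp_nat_mul]
    congr 1
    ring
  have hprodnn : 0 ≤ (R.map fun r : ℝ => ‖(z - (r : ℂ)) ^ (-a)‖).prod :=
    multiset_map_prod_nonneg _ _ (fun r _ => norm_nonneg _)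
  rw [hnorm, mul_assoc]
  apply mul_le_mul_of_nonneg_left _ (norm_nonneg _)
  rcases le_total (Real.exp (-((Multiset.card R : ℝ) * a.re) * u)) 1 with h | h
  · refine hb2.trans ?_
    rw [min_eq_right h]
    exact mul_le_mul_of_nonneg_right (le_max_right _ _) (Real.exp_pos _).le
  · refine hb1.trans ?_
    rw [min_eq_left h]
    calc P = P * 1 := (mul_one P).symm
      _ ≤ max P (β ^ Multiset.card R) * 1 := by
          exact mul_le_mul_of_nonneg_right (le_max_left _ _) zero_le_one

/-- On positive reals, `Hfun` agrees with the principal power of the real product. -/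
lemma Hfun_real (c : ℝ) (hc : 0 ≤ c) (R : Multiset ℝ) (hR : ∀ r ∈ R, r < 0) (a : ℂ)
    {x : ℝ} (hx : 0 < x) :
    ((c * (R.map fun r => x - r).prod : ℝ) : ℂ) ^ (-a) = Hfun c R a (x : ℂ) := by
  have hpos : ∀ r ∈ R, 0 < x - r := fun r hr => by linarith [hR r hr]
  rw [Complex.ofReal_mul,
    Complex.mul_cpow_ofReal_nonneg hc (multiset_map_prod_nonneg R _ fun r hr => (hpos r hr).le),
    multiset_cpow_prod hpos (-a), Hfun]
  congr 1
  refine congrArg Multiset.prod (Multiset.map_congr rfl ?_)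
  intro r _
  push_cast
  ring_nf

/-- Differentiability of `w ↦ Hfun (exp w)` on the horizontal strip `|im| < π`. -/
lemma Hfun_diff (c : ℝ) (R : Multiset ℝ) (hR : ∀ r ∈ R, r < 0) (a s : ℂ)
    {w : ℂ} (hw : |w.im| < Real.pi) :
    DifferentiableAt ℂ (fun w => Hfun c R a (Complex.exp w) * Complex.exp (s * w)) w := by
  apply DifferentiableAt.mul
  · apply DifferentiableAt.const_mul
    have : ∀ (m : Multiset ℝ), (∀ r ∈ m, r < 0) → DifferentiableAt ℂ
        (fun w => (m.map fun r : ℝ => (Complex.exp w - (r : ℂ)) ^ (-a)).prod) w := by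
      intro m hm
      induction m using Multiset.induction_on with
      | empty => simpa using differentiableAt_const (1 : ℂ)
      | cons r m ih =>
        simp only [Multiset.map_cons, Multiset.prod_cons]
        apply DifferentiableAt.mul
        · exact DifferentiableAt.cpow ((Complex.differentiable_exp w).sub_const _)
            (differentiableAt_const _)
            (exp_sub_mem_slitPlane hw (hm r (Multiset.mem_cons_self _ _)))
        · exact ih fun x hx => hm x (Multiset.mem_cons_of_mem hx)
    exact this R hR
  · exact (Complex.differentiable_exp _).comp w ((differentiable_id.const_mul s) w)

/-- Horizontal contour shift for integrable, decaying holomorphic functions on a strip. -/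
lemma contour_shift (Ψ : ℂ → ℂ) (θ : ℝ)
    (hdiff : ∀ w : ℂ, w.im ∈ Set.uIcc 0 θ → DifferentiableAt ℂ Ψ w)
    (hint0 : Integrable (fun u : ℝ => Ψ (u : ℂ)))
    (hintθ : Integrable (fun u : ℝ => Ψ ((u : ℂ) + (θ : ℂ) * Complex.I)))
    (B : ℝ → ℝ)
    (hB : ∀ u y : ℝ, y ∈ Set.uIcc 0 θ → ‖Ψ ((u : ℂ) + (y : ℂ) * Complex.I)‖ ≤ B u)
    (hBtop : Tendsto B atTop (nhds 0)) (hBbot : Tendsto B atBot (nhds 0)) :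
    ∫ u : ℝ, Ψ ((u : ℂ) + (θ : ℂ) * Complex.I) = ∫ u : ℝ, Ψ (u : ℂ) := by
  have hn : Tendsto (fun n : ℕ => -(n : ℝ)) atTop atBot := by
    exact tendsto_neg_atBot_iff.mpr tendsto_natCast_atTop_atTop
  have hp : Tendsto (fun n : ℕ => (n : ℝ)) atTop atTop := tendsto_natCast_atTop_atTop
  -- rectangle identity for each n
  have key : ∀ n : ℕ,
      (∫ x in (-(n:ℝ))..(n:ℝ), Ψ ((x : ℂ) + (θ : ℂ) * Complex.I))
        = (∫ x in (-(n:ℝ))..(n:ℝ), Ψ (x : ℂ))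
          + ((Complex.I • ∫ y in (0:ℝ)..θ, Ψ ((n : ℝ) + (y : ℂ) * Complex.I))
            - Complex.I • ∫ y in (0:ℝ)..θ, Ψ ((-(n:ℝ) : ℝ) + (y : ℂ) * Complex.I)) := by
    intro n
    have hrect := Complex.integral_boundary_rect_eq_zero_of_differentiableOn Ψ
      (((-(n:ℝ) : ℝ)) : ℂ) (((n : ℝ) : ℂ) + (θ : ℂ) * Complex.I) ?_
    · have e1 : ((((-(n:ℝ)) : ℝ) : ℂ)).re = -(n:ℝ) := by simp
      have e2 : ((((n:ℝ) : ℂ)) + (θ : ℂ) * Complex.I).re = (n : ℝ) := by simp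
      have e3 : ((((-(n:ℝ)) : ℝ) : ℂ)).im = 0 := by simp
      have e4 : ((((n:ℝ) : ℂ)) + (θ : ℂ) * Complex.I).im = θ := by simp
      rw [e1, e2, e3, e4] at hrect
      simp only [Complex.ofReal_zero, zero_mul, add_zero] at hrect
      linear_combination (norm := abel) -hrect
    · intro w hw
      rw [Complex.mem_reProdIm] at hw
      refine (hdiff w ?_).differentiableWithinAt
      have := hw.2
      simpa using this
  -- limits
  have T1 : Tendsto (fun n : ℕ => ∫ x in (-(n:ℝ))..(n:ℝ), Ψ (x : ℂ)) atTop
      (nhds (∫ u : ℝ, Ψ (u : ℂ))) :=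
    intervalIntegral_tendsto_integral hint0 hn hp
  have T2 : Tendsto (fun n : ℕ => ∫ x in (-(n:ℝ))..(n:ℝ), Ψ ((x : ℂ) + (θ : ℂ) * Complex.I))
      atTop (nhds (∫ u : ℝ, Ψ ((u : ℂ) + (θ : ℂ) * Complex.I))) :=
    intervalIntegral_tendsto_integral hintθ hn hp
  have T3 : Tendsto (fun n : ℕ =>
      ((Complex.I • ∫ y in (0:ℝ)..θ, Ψ ((n : ℝ) + (y : ℂ) * Complex.I))
        - Complex.I • ∫ y in (0:ℝ)..θ, Ψ ((-(n:ℝ) : ℝ) + (y : ℂ) * Complex.I))) atTop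
      (nhds 0) := by
    refine squeeze_zero_norm (a := fun n : ℕ => (B (n : ℝ) + B (-(n:ℝ))) * |θ|) ?_ ?_
    · intro n
      have b1 : ‖∫ y in (0:ℝ)..θ, Ψ ((n : ℝ) + (y : ℂ) * Complex.I)‖ ≤ B (n:ℝ) * |θ - 0| :=
        intervalIntegral.norm_integral_le_of_norm_le_const (fun y hy =>
          hB (n : ℝ) y (Set.uIoc_subset_uIcc hy))
      have b2 : ‖∫ y in (0:ℝ)..θ, Ψ ((-(n:ℝ) : ℝ) + (y : ℂ) * Complex.I)‖ ≤ B (-(n:ℝ)) * |θ - 0| :=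
        intervalIntegral.norm_integral_le_of_norm_le_const (fun y hy =>
          hB (-(n:ℝ)) y (Set.uIoc_subset_uIcc hy))
      rw [sub_zero] at b1 b2
      calc ‖_ - _‖ ≤ ‖Complex.I • ∫ y in (0:ℝ)..θ, Ψ ((n : ℝ) + (y : ℂ) * Complex.I)‖
            + ‖Complex.I • ∫ y in (0:ℝ)..θ, Ψ ((-(n:ℝ) : ℝ) + (y : ℂ) * Complex.I)‖ :=
          norm_sub_le _ _
        _ ≤ B (n:ℝ) * |θ| + B (-(n:ℝ)) * |θ| := by
            rw [norm_smul, norm_smul, Complex.norm_I, one_mul, one_mul]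
            exact add_le_add b1 b2
        _ = (B (n : ℝ) + B (-(n:ℝ))) * |θ| := by ring
    · have := ((hBtop.comp hp).add (hBbot.comp hn)).mul_const |θ|
      simpa using this
  have T2' : Tendsto (fun n : ℕ => ∫ x in (-(n:ℝ))..(n:ℝ), Ψ ((x : ℂ) + (θ : ℂ) * Complex.I))
      atTop (nhds ((∫ u : ℝ, Ψ (u : ℂ)) + 0)) := by
    apply Tendsto.congr (fun n => (key n).symm)
    exact T1.add T3
  have := tendsto_nhds_unique T2 T2'
  rw [this, add_zero]

lemma abs_le_abs_of_mem_uIcc {y θ : ℝ} (hy : y ∈ Set.uIcc (0:ℝ) θ) : |y| ≤ |θ| := by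
  rcases Set.mem_uIcc.mp hy with ⟨h1, h2⟩ | ⟨h1, h2⟩
  · rw [_root_.abs_of_nonneg h1]; exact h2.trans (le_abs_self θ)
  · rw [_root_.abs_of_nonpos h2]
    have := neg_abs_le θ
    linarith

lemma integrable_exp_neg_mul_abs {m : ℝ} (hm : 0 < m) :
    Integrable (fun u : ℝ => Real.exp (-m * |u|)) := by
  have hIoi : IntegrableOn (fun u : ℝ => Real.exp (-m * |u|)) (Set.Ioi 0) := by
    refine (exp_neg_integrableOn_Ioi 0 hm).congr_fun (fun x hx => ?_) measurableSet_Ioi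
    rw [_root_.abs_of_pos hx]
  have hIic : IntegrableOn (fun u : ℝ => Real.exp (-m * |u|)) (Set.Iic 0) := by
    rw [← Measure.map_neg_eq_self (volume : Measure ℝ)]
    have m' : MeasurableEmbedding fun x : ℝ => -x := (Homeomorph.neg ℝ).measurableEmbedding
    rw [m'.integrableOn_map_iff]
    simp_rw [Function.comp_def, abs_neg, neg_preimage, neg_Iic, neg_zero]
    exact Iff.mpr integrableOn_Ici_iff_integrableOn_Ioi hIoi
  have h := hIic.union hIoi
  rwa [Set.Iic_union_Ioi, integrableOn_univ] at h

/-- If all roots of `f` are real, then `F_f(a, σ + it)` decays like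
`exp(−(π−ε)|t|)` as `|t| → ∞`, uniformly for `σ` in compact subsets of `(0, d·Re(a))`. -/
theorem stmt5 (f : Polynomial ℝ) (d : ℕ) (hd : f.natDegree = d) (hd1 : 1 ≤ d)
    (hf : ∀ x : ℝ, 0 ≤ x → 0 < f.eval x)
    (hsplit : f.Splits) :
    ∀ (a : ℂ) (ε : ℝ), 0 < ε → ε < Real.pi →
      ∀ σ₁ σ₂ : ℝ, 0 < σ₁ → σ₁ ≤ σ₂ → σ₂ < d * a.re →
        ∃ C : ℝ, 0 < C ∧ ∀ σ ∈ Set.Icc σ₁ σ₂, ∀ t : ℝ, 1 ≤ |t| →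
          ‖∫ x in Set.Ioi (0 : ℝ),
              (((f.eval x : ℝ) : ℂ)) ^ (-a) * (x : ℂ) ^ ((σ : ℂ) + (t : ℂ) * Complex.I - 1)‖ ≤
            C * Real.exp (-(Real.pi - ε) * |t|) := by
  intro a ε hε hεπ σ₁ σ₂ hσ₁ hσ₁₂ hσ₂
  -- basic structure of f
  set R : Multiset ℝ := f.roots with hRdef
  set c : ℝ := f.leadingCoeff with hcdef
  have hcard : Multiset.card R = d := by
    rw [hRdef, (Polynomial.splits_iff_card_roots).mp hsplit, hd]
  have hRneg : ∀ r ∈ R, r < 0 := by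
    intro r hr
    by_contra h
    push_neg at h
    have : f.eval r = 0 := Polynomial.isRoot_of_mem_roots hr
    have := hf r h
    linarith
  have hfactor : f = Polynomial.C c * (R.map fun r => Polynomial.X - Polynomial.C r).prod :=
    hsplit.eq_prod_roots
  have heval : ∀ x : ℝ, f.eval x = c * (R.map fun r => x - r).prod := by
    intro x
    conv_lhs => rw [hfactor]
    rw [Polynomial.eval_mul, Polynomial.eval_C, Polynomial.eval_multiset_prod,
      Multiset.map_map]
    congr 1
    refine congrArg Multiset.prod (Multiset.map_congr rfl ?_)
    intro r _
    simp [Function.comp]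
  have hprod0 : 0 < ((R.map fun r => (0:ℝ) - r).prod) :=
    multiset_map_prod_pos R _ (fun r hr => by have := hRneg r hr; linarith)
  have hc : 0 < c := by
    have h0 := hf 0 le_rfl
    rw [heval 0] at h0
    nlinarith
  -- positivity of a.re
  have hda : 0 < (d : ℝ) * a.re := lt_of_le_of_lt (le_of_lt (lt_of_lt_of_le hσ₁ hσ₁₂)) hσ₂
  have hdpos : (0:ℝ) < (d : ℕ) := by exact_mod_cast hd1
  have ha : 0 < a.re := by nlinarith
  set D : ℝ := (d : ℝ) * a.re with hDdef
  -- uniform bound for Hfun along rays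
  obtain ⟨K, hK, hKb⟩ := Hfun_bound c hc R hRneg a ha.le hε hεπ
  rw [hcard] at hKb
  -- the integrable majorant
  set m : ℝ := min σ₁ (D - σ₂) with hmdef
  have hm : 0 < m := lt_min hσ₁ (by simp only [hDdef]; linarith)
  set φ : ℝ → ℝ := fun u => 2 * Real.exp (-m * |u|) with hφdef
  have hφint : Integrable φ := (integrable_exp_neg_mul_abs hm).const_mul 2
  have hφnn : ∀ u, 0 ≤ φ u := fun u => by positivity
  have hφpt : ∀ σ ∈ Set.Icc σ₁ σ₂, ∀ u : ℝ,
      min 1 (Real.exp (-D * u)) * Real.exp (σ * u) ≤ φ u := by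
    rintro σ ⟨hl, hr⟩ u
    rcases le_total u 0 with hu | hu
    · have h1 : min 1 (Real.exp (-D * u)) * Real.exp (σ * u) ≤ Real.exp (σ * u) := by
        calc min 1 (Real.exp (-D * u)) * Real.exp (σ * u)
            ≤ 1 * Real.exp (σ * u) :=
              mul_le_mul_of_nonneg_right (min_le_left _ _) (Real.exp_pos _).le
          _ = Real.exp (σ * u) := one_mul _
      have h2 : Real.exp (σ * u) ≤ Real.exp (-m * |u|) := by
        apply Real.exp_le_exp.mpr
        rw [_root_.abs_of_nonpos hu]
        nlinarith [mul_nonneg (sub_nonneg.mpr (le_trans (min_le_left σ₁ (D - σ₂)) hl))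
          (neg_nonneg.mpr hu)]
      calc min 1 (Real.exp (-D * u)) * Real.exp (σ * u) ≤ Real.exp (σ * u) := h1
        _ ≤ Real.exp (-m * |u|) := h2
        _ ≤ φ u := by
            have := Real.exp_pos (-m * |u|)
            simp only [hφdef]
            linarith
    · have h1 : min 1 (Real.exp (-D * u)) * Real.exp (σ * u)
          ≤ Real.exp (-D * u) * Real.exp (σ * u) :=
        mul_le_mul_of_nonneg_right (min_le_right _ _) (Real.exp_pos _).le
      have h2 : Real.exp (-D * u) * Real.exp (σ * u) ≤ Real.exp (-m * |u|) := by
        rw [← Real.exp_add]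
        apply Real.exp_le_exp.mpr
        rw [_root_.abs_of_nonneg hu]
        nlinarith [mul_nonneg (by linarith [min_le_right σ₁ (D - σ₂)] : (0:ℝ) ≤ D - σ - m) hu]
      calc min 1 (Real.exp (-D * u)) * Real.exp (σ * u)
          ≤ Real.exp (-D * u) * Real.exp (σ * u) := h1
        _ ≤ Real.exp (-m * |u|) := h2
        _ ≤ φ u := by
            have := Real.exp_pos (-m * |u|)
            simp only [hφdef]
            linarith
  have hφ0 : (0:ℝ) ≤ ∫ u : ℝ, φ u := integral_nonneg hφnn
  -- tendsto of the majorant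
  have hφtop : Tendsto φ atTop (nhds 0) := by
    have h1 : Tendsto (fun u : ℝ => m * |u|) atTop atTop :=
      (tendsto_abs_atTop_atTop).const_mul_atTop hm
    have h2 : Tendsto (fun u : ℝ => Real.exp (-(m * |u|))) atTop (nhds 0) :=
      Real.tendsto_exp_neg_atTop_nhds_zero.comp h1
    have h3 : Tendsto (fun u : ℝ => 2 * Real.exp (-(m * |u|))) atTop (nhds (2 * 0)) :=
      h2.const_mul 2
    simp only [mul_zero] at h3
    refine h3.congr fun u => ?_
    rw [hφdef]; ring_nf
  have hφbot : Tendsto φ atBot (nhds 0) := by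
    have h1 : Tendsto (fun u : ℝ => m * |u|) atBot atTop :=
      (tendsto_abs_atBot_atTop).const_mul_atTop hm
    have h2 : Tendsto (fun u : ℝ => Real.exp (-(m * |u|))) atBot (nhds 0) :=
      Real.tendsto_exp_neg_atTop_nhds_zero.comp h1
    have h3 : Tendsto (fun u : ℝ => 2 * Real.exp (-(m * |u|))) atBot (nhds (2 * 0)) :=
      h2.const_mul 2
    simp only [mul_zero] at h3
    refine h3.congr fun u => ?_
    rw [hφdef]; ring_nf
  refine ⟨K * (∫ u : ℝ, φ u) + 1, by positivity, ?_⟩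
  intro σ hσ t ht
  set s : ℂ := (σ : ℂ) + (t : ℂ) * Complex.I with hsdef
  have hsre : s.re = σ := by simp [hsdef]
  have hsim : s.im = t := by simp [hsdef]
  set θ : ℝ := if 0 ≤ t then Real.pi - ε else -(Real.pi - ε) with hθdef
  have hθabs : |θ| = Real.pi - ε := by
    rw [hθdef]
    split_ifs with h
    · exact _root_.abs_of_pos (by linarith)
    · rw [_root_.abs_neg]; exact _root_.abs_of_pos (by linarith)
  have hθt : t * θ = |t| * (Real.pi - ε) := by
    rw [hθdef]; split_ifs with h
    · rw [_root_.abs_of_nonneg h]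
    · push_neg at h; rw [_root_.abs_of_neg h]; ring
  set Ψ : ℂ → ℂ := fun w => Hfun c R a (Complex.exp w) * Complex.exp (s * w) with hΨdef
  -- norm formula for Ψ on horizontal lines
  have hnorm : ∀ u y : ℝ, ‖Ψ ((u : ℂ) + (y : ℂ) * Complex.I)‖
      = ‖Hfun c R a (Complex.exp ((u : ℂ) + (y : ℂ) * Complex.I))‖
        * Real.exp (σ * u - t * y) := by
    intro u y
    rw [hΨdef]
    simp only [norm_mul]
    congr 1
    rw [Complex.norm_exp]
    congr 1
    rw [Complex.mul_re]
    simp [hsre, hsim]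
  -- global bound on the strip
  have hΨb : ∀ u y : ℝ, |y| ≤ Real.pi - ε →
      ‖Ψ ((u : ℂ) + (y : ℂ) * Complex.I)‖
        ≤ K * (min 1 (Real.exp (-D * u)) * Real.exp (σ * u)) * Real.exp (-(t * y)) := by
    intro u y hy
    rw [hnorm u y]
    have hb := hKb u y hy
    have : Real.exp (σ * u - t * y) = Real.exp (σ * u) * Real.exp (-(t * y)) := by
      rw [← Real.exp_add]; ring_nf
    rw [this]
    calc ‖Hfun c R a (Complex.exp ((u : ℂ) + (y : ℂ) * Complex.I))‖
          * (Real.exp (σ * u) * Real.exp (-(t * y)))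
        ≤ (K * min 1 (Real.exp (-D * u))) * (Real.exp (σ * u) * Real.exp (-(t * y))) := by
          apply mul_le_mul_of_nonneg_right _ (by positivity)
          exact hb
      _ = K * (min 1 (Real.exp (-D * u)) * Real.exp (σ * u)) * Real.exp (-(t * y)) := by ring
  -- bound function for the contour shift
  set B : ℝ → ℝ := fun u => (K * Real.exp (|t| * (Real.pi - ε))) * φ u with hBdef
  have hBb : ∀ u y : ℝ, |y| ≤ Real.pi - ε →
      ‖Ψ ((u : ℂ) + (y : ℂ) * Complex.I)‖ ≤ B u := by
    intro u y hy
    refine (hΨb u y hy).trans ?_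
    rw [hBdef]
    have h1 : min 1 (Real.exp (-D * u)) * Real.exp (σ * u) ≤ φ u := hφpt σ hσ u
    have h2 : Real.exp (-(t * y)) ≤ Real.exp (|t| * (Real.pi - ε)) := by
      apply Real.exp_le_exp.mpr
      calc -(t * y) ≤ |t * y| := neg_le_abs _
        _ = |t| * |y| := abs_mul t y
        _ ≤ |t| * (Real.pi - ε) := mul_le_mul_of_nonneg_left hy (abs_nonneg t)
    calc K * (min 1 (Real.exp (-D * u)) * Real.exp (σ * u)) * Real.exp (-(t * y))
        ≤ K * (φ u) * Real.exp (|t| * (Real.pi - ε)) := by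
          apply mul_le_mul (mul_le_mul_of_nonneg_left h1 hK.le) h2 (Real.exp_pos _).le
          positivity
      _ = K * Real.exp (|t| * (Real.pi - ε)) * φ u := by ring
  -- integrability along horizontal lines
  have hline : ∀ y : ℝ, |y| ≤ Real.pi - ε →
      Integrable (fun u : ℝ => Ψ ((u : ℂ) + (y : ℂ) * Complex.I)) := by
    intro y hy
    have hcont : Continuous (fun u : ℝ => Ψ ((u : ℂ) + (y : ℂ) * Complex.I)) := by
      rw [continuous_iff_continuousAt]
      intro u
      have hin : ContinuousAt (fun u : ℝ => ((u : ℂ) + (y : ℂ) * Complex.I)) u :=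
        (Complex.continuous_ofReal.add continuous_const).continuousAt
      have him : |(((u : ℂ) + (y : ℂ) * Complex.I)).im| < Real.pi := by
        simp only [Complex.add_im, Complex.ofReal_im, Complex.mul_im, Complex.ofReal_re,
          Complex.I_im, Complex.I_re, mul_one, mul_zero, zero_add, add_zero, Complex.ofReal_im]
        calc |y| ≤ Real.pi - ε := hy
          _ < Real.pi := by linarith
      exact ContinuousAt.comp (f := fun u : ℝ => ((u : ℂ) + (y : ℂ) * Complex.I)) (g := Ψ)
        (Hfun_diff c R hRneg a s him).continuousAt hin
    refine Integrable.mono' ((hφint.const_mul (K * Real.exp (|t| * (Real.pi - ε)))))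
      hcont.aestronglyMeasurable ?_
    exact Filter.Eventually.of_forall fun u => hBb u y hy
  have hθle : |θ| ≤ Real.pi - ε := le_of_eq hθabs
  have hint0 : Integrable (fun u : ℝ => Ψ (u : ℂ)) := by
    have := hline 0 (by rw [abs_zero]; linarith)
    simpa using this
  have hintθ : Integrable (fun u : ℝ => Ψ ((u : ℂ) + (θ : ℂ) * Complex.I)) := hline θ hθle
  -- the contour shift
  have hdiff : ∀ w : ℂ, w.im ∈ Set.uIcc 0 θ → DifferentiableAt ℂ Ψ w := by
    intro w hw
    refine Hfun_diff c R hRneg a s ?_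
    calc |w.im| ≤ |θ| := abs_le_abs_of_mem_uIcc hw
      _ < Real.pi := by rw [hθabs]; linarith
  have hBmem : ∀ u y : ℝ, y ∈ Set.uIcc 0 θ → ‖Ψ ((u : ℂ) + (y : ℂ) * Complex.I)‖ ≤ B u :=
    fun u y hy => hBb u y ((abs_le_abs_of_mem_uIcc hy).trans hθle)
  have hBtop : Tendsto B atTop (nhds 0) := by
    have h := hφtop.const_mul (K * Real.exp (|t| * (Real.pi - ε)))
    rw [mul_zero] at h
    exact h
  have hBbot : Tendsto B atBot (nhds 0) := by
    have h := hφbot.const_mul (K * Real.exp (|t| * (Real.pi - ε)))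
    rw [mul_zero] at h
    exact h
  have hshift := contour_shift Ψ θ hdiff hint0 hintθ B hBmem hBtop hBbot
  -- identify the original integral with ∫ Ψ(u)
  have hcongr : (∫ x in Set.Ioi (0:ℝ),
        (((f.eval x : ℝ) : ℂ)) ^ (-a) * (x : ℂ) ^ ((σ : ℂ) + (t : ℂ) * Complex.I - 1))
      = ∫ x in Set.Ioi (0:ℝ), Hfun c R a (x : ℂ) * (x : ℂ) ^ (s - 1) := by
    refine setIntegral_congr_fun measurableSet_Ioi (fun x hx => ?_)
    have hx0 : (0:ℝ) < x := hx
    rw [heval x, Hfun_real c hc.le R hRneg a hx0, hsdef]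
  have hsub : (∫ x in Set.Ioi (0:ℝ), Hfun c R a (x : ℂ) * (x : ℂ) ^ (s - 1))
      = ∫ u : ℝ, Ψ (u : ℂ) := by
    rw [← Real.range_exp, ← Set.image_univ,
      integral_image_eq_integral_abs_deriv_smul MeasurableSet.univ
        (fun x _ => (Real.hasDerivAt_exp x).hasDerivWithinAt) Real.exp_injective.injOn
        (fun x : ℝ => Hfun c R a (x : ℂ) * (x : ℂ) ^ (s - 1)),
      setIntegral_univ]
    congr 1
    funext u
    rw [abs_of_pos (Real.exp_pos u), Complex.real_smul, Complex.ofReal_exp]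
    have hcp : (Complex.exp (u:ℂ)) ^ (s - 1) = Complex.exp ((u:ℂ) * (s - 1)) := by
      rw [Complex.cpow_def_of_ne_zero (Complex.exp_ne_zero _),
        Complex.log_exp (by simp [Real.pi_pos]) (by simp [Real.pi_pos.le])]
    rw [hcp, hΨdef]
    have : Complex.exp (u:ℂ) * Complex.exp ((u:ℂ) * (s - 1)) = Complex.exp (s * (u:ℂ)) := by
      rw [← Complex.exp_add]; congr 1; ring
    calc Complex.exp (u:ℂ) * (Hfun c R a (Complex.exp (u:ℂ)) * Complex.exp ((u:ℂ) * (s - 1)))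
        = Hfun c R a (Complex.exp (u:ℂ))
            * (Complex.exp (u:ℂ) * Complex.exp ((u:ℂ) * (s - 1))) := by ring
      _ = Hfun c R a (Complex.exp (u:ℂ)) * Complex.exp (s * (u:ℂ)) := by rw [this]
  -- final estimate
  rw [hcongr, hsub, ← hshift]
  have hptθ : ∀ u : ℝ, ‖Ψ ((u : ℂ) + (θ : ℂ) * Complex.I)‖
      ≤ (K * Real.exp (-(Real.pi - ε) * |t|)) * φ u := by
    intro u
    refine (hΨb u θ hθle).trans ?_
    have h1 : min 1 (Real.exp (-D * u)) * Real.exp (σ * u) ≤ φ u := hφpt σ hσ u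
    have h2 : Real.exp (-(t * θ)) = Real.exp (-(Real.pi - ε) * |t|) := by
      rw [hθt]; ring_nf
    rw [h2]
    calc K * (min 1 (Real.exp (-D * u)) * Real.exp (σ * u)) * Real.exp (-(Real.pi - ε) * |t|)
        ≤ K * φ u * Real.exp (-(Real.pi - ε) * |t|) := by
          apply mul_le_mul_of_nonneg_right (mul_le_mul_of_nonneg_left h1 hK.le)
            (Real.exp_pos _).le
      _ = (K * Real.exp (-(Real.pi - ε) * |t|)) * φ u := by ring
  have hnb := norm_integral_le_of_norm_le
    ((hφint.const_mul (K * Real.exp (-(Real.pi - ε) * |t|))))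
    (Filter.Eventually.of_forall hptθ)
  refine hnb.trans ?_
  rw [MeasureTheory.integral_const_mul]
  have hexp : (0:ℝ) < Real.exp (-(Real.pi - ε) * |t|) := Real.exp_pos _
  nlinarith [hφ0, hK, hexp]
end

section
/- Let Z_B : ℂ → ℂ be any meromorphic continuation of ω_B. Then (s − 1/2) · Z_B(s) tends to Γ(1/4)² / (8·√(2π)) as s → 1/2 with s ≠ 1/2; that is, ω_B has a simple pole at s = 1/2 with residue Γ(1/4)² / (8·√(2π)). -/
open Complex Filter Topology Set MeasureTheory

namespace Stmt8Aux


noncomputable def g (σ t : ℝ) : ℝ := (t * (t + 1) * (t + 2)) ^ (-σ)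

noncomputable def f (σ x y : ℝ) : ℝ := (x * y * (x + y) * (x + 2 * y)) ^ (-σ)

noncomputable def J (σ : ℝ) : ℝ := ∫ t in Ioi (0:ℝ), g σ t

noncomputable def D (t : ℝ) : ℝ := if t ≤ 1 then t ^ (-(3/4) : ℝ) else t ^ (-(3/2) : ℝ)

lemma rpow_neg_anti {a b σ : ℝ} (ha : 0 < a) (hab : a ≤ b) (hσ : 0 ≤ σ) :
    b ^ (-σ) ≤ a ^ (-σ) := by
  rw [Real.rpow_neg (ha.trans_le hab).le, Real.rpow_neg ha.le]
  exact inv_anti₀ (Real.rpow_pos_of_pos ha _) (Real.rpow_le_rpow ha.le hab hσ)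

lemma g_nonneg {σ t : ℝ} (ht : 0 ≤ t) : 0 ≤ g σ t := by
  apply Real.rpow_nonneg
  have h1 : (0:ℝ) ≤ t + 1 := by linarith
  have h2 : (0:ℝ) ≤ t + 2 := by linarith
  positivity

lemma f_nonneg {σ x y : ℝ} (hx : 0 ≤ x) (hy : 0 ≤ y) : 0 ≤ f σ x y := by
  apply Real.rpow_nonneg
  have h1 : (0:ℝ) ≤ x + y := by linarith
  have h2 : (0:ℝ) ≤ x + 2 * y := by linarith
  positivity

lemma g_contOn (σ : ℝ) : ContinuousOn (g σ) (Ioi (0:ℝ)) := by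
  intro t ht
  have ht' : (0:ℝ) < t := ht
  have hb : (0:ℝ) < t * (t + 1) * (t + 2) :=
    mul_pos (mul_pos ht' (by linarith)) (by linarith)
  apply ContinuousAt.continuousWithinAt
  exact ContinuousAt.rpow_const (by fun_prop) (Or.inl hb.ne')

lemma g_aesm (σ : ℝ) : AEStronglyMeasurable (g σ) (volume.restrict (Ioi (0:ℝ))) :=
  (g_contOn σ).aestronglyMeasurable measurableSet_Ioi

lemma g_le_D {σ t : ℝ} (hσ : σ ∈ Icc (1/2 : ℝ) (3/4)) (ht : t ∈ Ioi (0:ℝ)) :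
    g σ t ≤ D t := by
  obtain ⟨hσ1, hσ2⟩ := hσ
  simp only [mem_Ioi] at ht
  unfold g D
  split_ifs with h1
  · calc (t * (t + 1) * (t + 2)) ^ (-σ) ≤ t ^ (-σ) :=
by
          have h2 : (0:ℝ) < t + 1 := by linarith
          have h3 : (0:ℝ) < t + 2 := by linarith
          have h5 : (1:ℝ) ≤ (t + 1) * (t + 2) := by nlinarith
          have h4 : t ≤ t * (t + 1) * (t + 2) := by
            nlinarith [mul_le_mul_of_nonneg_left h5 ht.le]
          exact rpow_neg_anti ht h4 (by linarith)
    _ ≤ t ^ (-(3/4) : ℝ) :=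
          Real.rpow_le_rpow_of_exponent_ge ht h1 (by linarith)
  · push_neg at h1
    calc (t * (t + 1) * (t + 2)) ^ (-σ) ≤ (t * t * t) ^ (-σ) := by
          apply rpow_neg_anti (by positivity) (by nlinarith) (by linarith)
    _ = t ^ ((3:ℝ) * (-σ)) := by
          rw [Real.rpow_mul ht.le]
          congr 1
          rw [show (3:ℝ) = ((3:ℕ):ℝ) by norm_num, Real.rpow_natCast]
          ring
    _ ≤ t ^ (-(3/2) : ℝ) :=
          Real.rpow_le_rpow_of_exponent_le h1.le (by linarith)

lemma D_integrable : IntegrableOn D (Ioi (0:ℝ)) := by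
  rw [← Set.Ioc_union_Ioi_eq_Ioi (zero_le_one (α := ℝ))]
  apply IntegrableOn.union
  · have h1 : IntegrableOn (fun t : ℝ => t ^ (-(3/4):ℝ)) (Ioc (0:ℝ) 1) := by
      have := intervalIntegral.intervalIntegrable_rpow' (a := 0) (b := 1)
        (r := -(3/4)) (by norm_num)
      rwa [intervalIntegrable_iff_integrableOn_Ioc_of_le zero_le_one] at this
    exact h1.congr_fun (fun t ht => by simp [D, ht.2]) measurableSet_Ioc
  · have h1 : IntegrableOn (fun t : ℝ => t ^ (-(3/2):ℝ)) (Ioi (1:ℝ)) :=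
      integrableOn_Ioi_rpow_of_lt (by norm_num) one_pos
    exact h1.congr_fun (fun t ht => by
      simp only [D, if_neg (not_le.mpr (mem_Ioi.mp ht))]) measurableSet_Ioi

lemma g_integrableOn {σ : ℝ} (hσ : σ ∈ Icc (1/2 : ℝ) (3/4)) :
    IntegrableOn (g σ) (Ioi (0:ℝ)) := by
  apply Integrable.mono' D_integrable (g_aesm σ)
  rw [ae_restrict_iff' measurableSet_Ioi]
  filter_upwards with t ht
  rw [Real.norm_of_nonneg (g_nonneg (le_of_lt ht))]
  exact g_le_D hσ ht

lemma J_nonneg (σ : ℝ) : 0 ≤ J σ :=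
  setIntegral_nonneg measurableSet_Ioi (fun t ht => g_nonneg (le_of_lt ht))

lemma J_tendsto : Tendsto J (𝓝[>] (1/2:ℝ)) (𝓝 (J (1/2))) := by
  apply tendsto_integral_filter_of_dominated_convergence D
  · filter_upwards with σ
    exact g_aesm σ
  · filter_upwards [Ioc_mem_nhdsGT (show (1/2:ℝ) < 3/4 by norm_num)] with σ hσ
    rw [ae_restrict_iff' measurableSet_Ioi]
    filter_upwards with t ht
    rw [Real.norm_of_nonneg (g_nonneg (le_of_lt ht))]
    exact g_le_D ⟨hσ.1.le, hσ.2⟩ ht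
  · exact D_integrable
  · rw [ae_restrict_iff' measurableSet_Ioi]
    filter_upwards with t
    intro ht
    have ht' : (0:ℝ) < t := ht
    have hb : (0:ℝ) < t * (t + 1) * (t + 2) :=
      mul_pos (mul_pos ht' (by linarith)) (by linarith)
    unfold g
    have h1 : Tendsto (fun σ : ℝ => -σ) (𝓝[>] (1/2:ℝ)) (𝓝 (-(1/2))) :=
      (continuous_neg.tendsto _).mono_left nhdsWithin_le_nhds
    have := (Real.continuousAt_const_rpow (a := t * (t+1) * (t+2))
      (b := -(1/2)) hb.ne').tendsto.comp h1
    exact this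




lemma f_eq (σ : ℝ) {x b : ℝ} (hx : 0 < x) (hb : 0 < b) :
    f σ x b = b ^ (-(4*σ)) * g σ (b⁻¹ * x) := by
  unfold f g
  rw [show -(4*σ) = (4:ℝ)*(-σ) by ring, Real.rpow_mul hb.le, ← Real.mul_rpow (by positivity)
    (by positivity)]
  congr 1
  rw [show b ^ (4:ℝ) = b ^ (4:ℕ) by rw [← Real.rpow_natCast b 4]; norm_num]
  field_simp

lemma f_integrableOn {σ b : ℝ} (hσ : σ ∈ Icc (1/2 : ℝ) (3/4)) (hb : 0 < b) :
    IntegrableOn (fun x => f σ x b) (Ioi (0:ℝ)) := by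
  have h1 : IntegrableOn (fun x => g σ (b⁻¹ * x)) (Ioi (0:ℝ)) := by
    have := (integrableOn_Ioi_comp_mul_left_iff (g σ) 0 (inv_pos.mpr hb)).mpr
    rw [mul_zero] at this
    exact this (g_integrableOn hσ)
  exact IntegrableOn.congr_fun (h1.const_mul _)
    (fun x hx => (f_eq σ (mem_Ioi.mp hx) hb).symm) measurableSet_Ioi

lemma integral_f {σ b : ℝ} (hb : 0 < b) :
    ∫ x in Ioi (0:ℝ), f σ x b = b ^ (1 - 4*σ) * J σ := by
  rw [setIntegral_congr_fun measurableSet_Ioi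
    (fun x hx => f_eq σ (mem_Ioi.mp hx) hb), integral_const_mul]
  rw [integral_comp_mul_left_Ioi (g σ) 0 (inv_pos.mpr hb)]
  rw [show (1 - 4*σ) = -(4*σ) + 1 by ring, Real.rpow_add hb, Real.rpow_one]
  simp only [mul_zero, inv_inv, smul_eq_mul, J]
  ring

lemma f_le_of_small {σ x b : ℝ} (hσ : σ ∈ Icc (1/2 : ℝ) (3/4)) (hx : 0 < x)
    (hb : 1 ≤ b) : f σ x b ≤ x ^ (-σ) * b ^ (-(3/2) : ℝ) := by
  obtain ⟨hσ1, hσ2⟩ := hσ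
  have hb0 : (0:ℝ) < b := by linarith
  have h1 : f σ x b ≤ (x * b^3) ^ (-σ) := by
    apply rpow_neg_anti (by positivity) ?_ (by linarith)
    nlinarith [mul_nonneg (mul_nonneg (mul_pos hx hb0).le hx.le) hx.le,
      mul_nonneg (mul_nonneg (mul_pos hx hb0).le hx.le) hb0.le,
      mul_nonneg (mul_nonneg (mul_pos hx hb0).le hb0.le) hb0.le]
  refine h1.trans ?_
  rw [Real.mul_rpow hx.le (by positivity)]
  have h2 : (b^3 : ℝ) ^ (-σ) ≤ b ^ (-(3/2) : ℝ) := by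
    rw [show ((b^3 : ℝ)) = b ^ ((3:ℕ):ℝ) by rw [Real.rpow_natCast], ← Real.rpow_mul hb0.le]
    apply Real.rpow_le_rpow_of_exponent_le hb
    push_cast; linarith
  exact mul_le_mul_of_nonneg_left h2 (Real.rpow_nonneg hx.le _)

lemma f_anti {σ b : ℝ} (hσ : 0 ≤ σ) (hb : 0 < b) :
    AntitoneOn (fun x => f σ x b) (Ici (1:ℝ)) := by
  intro x hx y hy hxy
  simp only [mem_Ici] at hx hy
  have hx0 : (0:ℝ) < x := by linarith
  have hy0 : (0:ℝ) < y := by linarith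
  apply rpow_neg_anti
    (mul_pos (mul_pos (mul_pos hx0 hb) (by linarith)) (by linarith)) ?_ hσ
  gcongr <;> nlinarith

lemma rpow_const_anti {c : ℝ} (hc : c ≤ 0) :
    AntitoneOn (fun y : ℝ => y ^ c) (Ici (1:ℝ)) := by
  intro x hx y hy hxy
  simp only [mem_Ici] at hx hy
  rw [show c = -(-c) by ring]
  exact rpow_neg_anti (by linarith) hxy (by linarith)

lemma e_bound {σ b : ℝ} (hσ : σ ∈ Icc (1/2 : ℝ) (3/4)) (hb : 1 ≤ b) :
    ∫ x in Ioc (0:ℝ) 1, f σ x b ≤ 4 * b ^ (-(3/2) : ℝ) := by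
  obtain ⟨hσ1, hσ2⟩ := hσ
  have hb0 : (0:ℝ) < b := by linarith
  have hint : IntegrableOn (fun x : ℝ => x ^ (-σ) * b ^ (-(3/2):ℝ)) (Ioc (0:ℝ) 1) := by
    apply Integrable.mul_const
    have := intervalIntegral.intervalIntegrable_rpow' (a := 0) (b := 1) (r := -σ)
      (by linarith)
    rwa [intervalIntegrable_iff_integrableOn_Ioc_of_le zero_le_one] at this
  have h1 : ∫ x in Ioc (0:ℝ) 1, f σ x b ≤ ∫ x in Ioc (0:ℝ) 1,
      x ^ (-σ) * b ^ (-(3/2):ℝ) := by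
    apply setIntegral_mono_on _ hint measurableSet_Ioc
    · exact fun x hx => f_le_of_small ⟨hσ1, hσ2⟩ hx.1 hb
    · exact (f_integrableOn ⟨hσ1, hσ2⟩ hb0).mono_set Ioc_subset_Ioi_self
  refine h1.trans ?_
  rw [integral_mul_const]
  have h2 : ∫ x in Ioc (0:ℝ) 1, x ^ (-σ) = 1 / (1 - σ) := by
    rw [← intervalIntegral.integral_of_le zero_le_one,
      integral_rpow (Or.inl (by linarith))]
    rw [Real.one_rpow, Real.zero_rpow (by linarith)]
    rw [show -σ+1 = 1-σ by ring]
    field_simp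
    rw [sub_zero]
  rw [h2]
  have h3 : (0:ℝ) < b ^ (-(3/2):ℝ) := Real.rpow_pos_of_pos hb0 _
  have h4 : 1 / (1 - σ) ≤ 4 := by
    rw [div_le_iff₀ (by linarith)]; linarith
  nlinarith



lemma iUnion_Ioc_eq_Ioi : (⋃ N : ℕ, Ioc (1:ℝ) (1 + N)) = Ioi (1:ℝ) := by
  ext z
  simp only [mem_iUnion, mem_Ioc, mem_Ioi]
  constructor
  · rintro ⟨N, h1, _⟩; exact h1
  · intro hz
    obtain ⟨N, hN⟩ := exists_nat_ge (z - 1)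
    exact ⟨N, hz, by linarith⟩

lemma tendsto_integral_Ioc {u : ℝ → ℝ} (hint : IntegrableOn u (Ioi 1)) :
    Tendsto (fun N : ℕ => ∫ x in Ioc (1:ℝ) (1 + N), u x) atTop
      (𝓝 (∫ x in Ioi (1:ℝ), u x)) := by
  have := tendsto_setIntegral_of_monotone (s := fun N : ℕ => Ioc (1:ℝ) (1 + N))
    (fun N => measurableSet_Ioc)
    (fun a b hab => Ioc_subset_Ioc le_rfl (by
      have : (a:ℝ) ≤ b := Nat.cast_le.mpr hab
      linarith))
    (by rw [iUnion_Ioc_eq_Ioi]; exact hint)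
  rwa [iUnion_Ioc_eq_Ioi] at this

/-- Integral over `(1,∞)` of an antitone nonneg function is at most `∑_{n≥1} u n`. -/
lemma integral_le_tsum {u : ℝ → ℝ} (hm : AntitoneOn u (Ici 1))
    (hnn : ∀ x ∈ Ici (1:ℝ), 0 ≤ u x) (hint : IntegrableOn u (Ioi 1))
    (hsum : Summable (fun n : ℕ => u (n + 1))) :
    ∫ x in Ioi (1:ℝ), u x ≤ ∑' n : ℕ, u (n + 1) := by
  apply le_of_tendsto (tendsto_integral_Ioc hint)
  filter_upwards with N
  have h1 : ∫ x in Ioc (1:ℝ) (1 + N), u x ≤ ∑ i ∈ Finset.range N, u (1 + i) := by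
    rw [← intervalIntegral.integral_of_le (by linarith [Nat.cast_nonneg (α := ℝ) N])]
    exact AntitoneOn.integral_le_sum (hm.mono (Icc_subset_Ici_self.trans (by
      intro x hx; exact hx)))
  refine h1.trans ?_
  have h2 : ∑ i ∈ Finset.range N, u (1 + i) = ∑ i ∈ Finset.range N, u ((i:ℝ) + 1) := by
    exact Finset.sum_congr rfl (fun i _ => by rw [add_comm])
  rw [h2]
  exact Summable.sum_le_tsum (Finset.range N)
    (fun i _ => hnn _ (by simp only [mem_Ici]; linarith [Nat.cast_nonneg (α := ℝ) i])) hsum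

/-- `∑_{n≥2} u n` is at most the integral over `(1,∞)` of an antitone nonneg function. -/
lemma tsum_le_integral {u : ℝ → ℝ} (hm : AntitoneOn u (Ici 1))
    (hnn : ∀ x ∈ Ici (1:ℝ), 0 ≤ u x) (hint : IntegrableOn u (Ioi 1)) :
    ∑' n : ℕ, u (n + 2) ≤ ∫ x in Ioi (1:ℝ), u x := by
  apply Real.tsum_le_of_sum_range_le
  · intro n
    exact hnn _ (by simp only [mem_Ici]; linarith [Nat.cast_nonneg (α := ℝ) n])
  intro N
  have h1 : ∑ i ∈ Finset.range N, u ((i:ℝ) + 2) =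
      ∑ i ∈ Finset.range N, u (1 + ((i:ℕ) + 1 : ℕ)) := by
    refine Finset.sum_congr rfl (fun i _ => by push_cast; ring_nf)
  rw [h1]
  have h2 : ∑ i ∈ Finset.range N, u (1 + ((i:ℕ) + 1 : ℕ)) ≤ ∫ x in (1:ℝ)..(1 + N), u x :=
    AntitoneOn.sum_le_integral (hm.mono (by intro x hx; exact hx.1))
  refine h2.trans ?_
  rw [intervalIntegral.integral_of_le (by linarith [Nat.cast_nonneg (α := ℝ) N])]
  apply setIntegral_mono_set hint
  · filter_upwards [ae_restrict_mem measurableSet_Ioi] with x hx using hnn x (mem_Ici.mpr (le_of_lt hx))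
  · exact HasSubset.Subset.eventuallyLE (fun x hx => hx.1)



/-- The real Beta value `B(1/4, 1/2)`. -/
noncomputable def B : ℝ := ∫ v in (0:ℝ)..1, v ^ (-(3/4) : ℝ) * (1 - v) ^ (-(1/2) : ℝ)

lemma B_eq_complex : (B : ℂ) = Complex.betaIntegral (1/4) (1/2) := by
  rw [Complex.betaIntegral, B]
  rw [← intervalIntegral.integral_ofReal]
  apply intervalIntegral.integral_congr
  intro x hx
  rw [uIcc_of_le zero_le_one] at hx
  have hx0 : (0:ℝ) ≤ x := hx.1
  have hx1 : (0:ℝ) ≤ 1 - x := by linarith [hx.2]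
  push_cast
  rw [Complex.ofReal_cpow hx0, Complex.ofReal_cpow hx1]
  push_cast
  norm_num

lemma B_eq_Gamma : Real.Gamma (1/4) * Real.Gamma (1/2) = Real.Gamma (3/4) * B := by
  have h := Complex.Gamma_mul_Gamma_eq_betaIntegral (s := 1/4) (t := 1/2)
    (by norm_num [Complex.ofReal_re]) (by norm_num)
  rw [show (1/4 : ℂ) + 1/2 = 3/4 by norm_num, ← B_eq_complex] at h
  have h14 : (1/4 : ℂ) = ((1/4 : ℝ) : ℂ) := by norm_num
  have h12 : (1/2 : ℂ) = ((1/2 : ℝ) : ℂ) := by norm_num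
  have h34 : (3/4 : ℂ) = ((3/4 : ℝ) : ℂ) := by norm_num
  rw [h14, h12, h34, Complex.Gamma_ofReal, Complex.Gamma_ofReal, Complex.Gamma_ofReal] at h
  exact_mod_cast h

lemma J_half_eq_B : J (1/2) = (1/2) * B := by
  have himg : (fun v : ℝ => v ^ (-(1/2) : ℝ) - 1) '' Ioo 0 1 = Ioi (0:ℝ) := by
    ext t
    simp only [mem_image, mem_Ioi, mem_Ioo]
    constructor
    · rintro ⟨v, ⟨hv0, hv1⟩, rfl⟩
      have : 1 < v ^ (-(1/2) : ℝ) :=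
        (Real.one_lt_rpow_iff_of_pos hv0).mpr (Or.inr ⟨hv1, by norm_num⟩)
      linarith
    · intro ht
      refine ⟨(t+1) ^ (-(2:ℝ)), ⟨by positivity,
        Real.rpow_lt_one_of_one_lt_of_neg (by linarith) (by norm_num)⟩, ?_⟩
      rw [← Real.rpow_mul (by linarith)]
      norm_num
  have hder : ∀ v ∈ Ioo (0:ℝ) 1, HasDerivWithinAt (fun v : ℝ => v ^ (-(1/2) : ℝ) - 1)
      (-(1/2) * v ^ (-(3/2) : ℝ)) (Ioo 0 1) v := by
    intro v hv
    have := (Real.hasDerivAt_rpow_const (x := v) (p := -(1/2)) (Or.inl hv.1.ne')).sub_const 1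
    rw [show (-(1/2):ℝ) - 1 = -(3/2) by norm_num] at this
    exact this.hasDerivWithinAt
  have hinj : InjOn (fun v : ℝ => v ^ (-(1/2) : ℝ) - 1) (Ioo 0 1) := by
    have key : ∀ v ∈ Ioo (0:ℝ) 1, (v ^ (-(1/2):ℝ)) ^ (-(2:ℝ)) = v := by
      intro v hv
      rw [← Real.rpow_mul hv.1.le]
      norm_num
    intro a ha b hb hab
    simp only [sub_left_inj] at hab
    rw [← key a ha, ← key b hb, hab]
  have := MeasureTheory.integral_image_eq_integral_abs_deriv_smul measurableSet_Ioo
    hder hinj (g (1/2))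
  rw [himg] at this
  rw [J, this]
  have hcongr : ∀ v ∈ Ioo (0:ℝ) 1,
      |(-(1/2) * v ^ (-(3/2) : ℝ))| • g (1/2) (v ^ (-(1/2) : ℝ) - 1)
      = (1/2) * (v ^ (-(3/4) : ℝ) * (1 - v) ^ (-(1/2) : ℝ)) := by
    intro v hv
    obtain ⟨hv0, hv1⟩ := hv
    have hw0 : (0:ℝ) < v ^ (-(1/2):ℝ) := Real.rpow_pos_of_pos hv0 _
    have habs : |(-(1/2) * v ^ (-(3/2) : ℝ))| = (1/2) * v ^ (-(3/2) : ℝ) := by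
      rw [abs_mul]
      rw [abs_of_pos (Real.rpow_pos_of_pos hv0 _)]
      norm_num
    rw [habs, smul_eq_mul]
    set w := v ^ (-(1/2):ℝ) with hwdef
    have hsq : w * w = v⁻¹ := by
      rw [hwdef, ← Real.rpow_add hv0]
      norm_num [Real.rpow_neg_one]
    have hvv : v * v⁻¹ = 1 := mul_inv_cancel₀ hv0.ne'
    have hbase : (w - 1) * ((w - 1) + 1) * ((w - 1) + 2) = w * (1 - v) * v⁻¹ := by
      linear_combination w * hsq + w * hvv
    rw [g, hbase]
    have h1v : (0:ℝ) ≤ 1 - v := by linarith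
    rw [Real.mul_rpow (by positivity) (by positivity),
        Real.mul_rpow hw0.le h1v]
    rw [← Real.rpow_mul hv0.le, show (-(1/2):ℝ) * (-(1/2)) = (1/4 : ℝ) by norm_num]
    rw [← Real.rpow_neg_one v, ← Real.rpow_mul hv0.le,
      show (-1 :ℝ) * (-(1/2)) = (1/2 : ℝ) by norm_num]
    have hcomb : v ^ (-(3/2):ℝ) * v ^ ((1/4):ℝ) * v ^ ((1/2):ℝ) = v ^ (-(3/4):ℝ) := by
      rw [← Real.rpow_add hv0, ← Real.rpow_add hv0]
      norm_num
    linear_combination (1/2) * (1-v) ^ (-(1/2):ℝ) * hcomb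
  rw [setIntegral_congr_fun measurableSet_Ioo hcongr]
  rw [integral_const_mul]
  rw [B, intervalIntegral.integral_of_le zero_le_one, integral_Ioc_eq_integral_Ioo]

lemma J_half : J (1/2) = Real.Gamma (1/4) ^ 2 / (2 * Real.sqrt (2 * Real.pi)) := by
  have hG14 : 0 < Real.Gamma (1/4) := Real.Gamma_pos_of_pos (by norm_num)
  have hG34 : 0 < Real.Gamma (3/4) := Real.Gamma_pos_of_pos (by norm_num)
  have hrefl : Real.Gamma (1/4) * Real.Gamma (3/4) = Real.pi * Real.sqrt 2 := by
    have := Real.Gamma_mul_Gamma_one_sub (1/4)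
    rw [show (1:ℝ) - 1/4 = 3/4 by norm_num] at this
    rw [this, show Real.pi * (1/4 : ℝ) = Real.pi/4 by ring, Real.sin_pi_div_four]
    rw [div_div_eq_mul_div, div_eq_iff (by positivity)]
    nlinarith [Real.sq_sqrt (by norm_num : (2:ℝ) ≥ 0), Real.sqrt_nonneg 2, Real.pi_pos]
  have hB : B = Real.Gamma (1/4) * Real.Gamma (1/2) / Real.Gamma (3/4) := by
    rw [eq_div_iff hG34.ne']
    linarith [B_eq_Gamma]
  rw [J_half_eq_B, hB, Real.Gamma_one_half_eq]
  have h2π : Real.sqrt (2 * Real.pi) = Real.sqrt 2 * Real.sqrt Real.pi :=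
    Real.sqrt_mul (by norm_num) _
  have hπ : Real.sqrt Real.pi > 0 := Real.sqrt_pos.mpr Real.pi_pos
  have h2 : Real.sqrt 2 > 0 := by positivity
  rw [h2π, show Real.Gamma (3/4) = Real.pi * Real.sqrt 2 / Real.Gamma (1/4) by
    rw [eq_div_iff hG14.ne']; linarith [hrefl]]
  have hsπ : Real.sqrt Real.pi * Real.sqrt Real.pi = Real.pi :=
    Real.mul_self_sqrt Real.pi_pos.le
  have hs2 : Real.sqrt 2 * Real.sqrt 2 = 2 := Real.mul_self_sqrt (by norm_num)
  field_simp
  linear_combination hsπ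


/-- If `h` is meromorphic at `x` and tends to `c` along a nontrivial filter contained in the
punctured neighborhood filter, then it tends to `c` on the whole punctured neighborhood. -/
lemma bridge {h : ℂ → ℂ} {x c : ℂ} (hm : MeromorphicAt h x) {l : Filter ℂ} [hne : l.NeBot]
    (hl : l ≤ 𝓝[≠] x) (hc : Tendsto h l (𝓝 c)) : Tendsto h (𝓝[≠] x) (𝓝 c) := by
  rcases eq_or_ne (meromorphicOrderAt h x) ⊤ with ho | ho
  · have hev : ∀ᶠ z in 𝓝[≠] x, h z = 0 := meromorphicOrderAt_eq_top_iff.mp ho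
    have h0 : Tendsto h (𝓝[≠] x) (𝓝 0) :=
      Tendsto.congr' (by filter_upwards [hev] with z hz using hz.symm) tendsto_const_nhds
    have : c = 0 := tendsto_nhds_unique hc (h0.mono_left hl)
    rwa [this]
  · obtain ⟨n, hn⟩ := WithTop.ne_top_iff_exists.mp ho
    obtain ⟨g, hg, hgx, hev⟩ := (meromorphicOrderAt_eq_int_iff (n := n) hm).mp hn.symm
    have hxne : ∀ᶠ z in 𝓝[≠] x, z ≠ x := by
      refine eventually_nhdsWithin_of_forall (fun z hz => hz)
    rcases le_or_gt 0 n with hn0 | hn0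
    · -- nonnegative order: h tends to `0 ^ n.toNat * g x`
      have hcont : Tendsto (fun z => (z - x) ^ n.toNat * g z) (𝓝 x)
          (𝓝 ((x - x) ^ n.toNat * g x)) := by
        exact ((continuous_id.sub continuous_const).pow _).continuousAt.mul
          hg.continuousAt
      have h1 : Tendsto h (𝓝[≠] x) (𝓝 ((x - x) ^ n.toNat * g x)) := by
        refine Tendsto.congr' ?_ (hcont.mono_left nhdsWithin_le_nhds)
        filter_upwards [hev] with z hz
        rw [hz, smul_eq_mul, ← zpow_natCast, Int.toNat_of_nonneg hn0]
      have : c = (x - x) ^ n.toNat * g x := tendsto_nhds_unique hc (h1.mono_left hl)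
      rwa [this]
    · -- negative order: contradiction with convergence along `l`
      exfalso
      set m : ℕ := (-n).toNat with hm'
      have hmn : (m : ℤ) = -n := Int.toNat_of_nonneg (by omega)
      have hm0 : 0 < m := by omega
      have hevl : ∀ᶠ z in l, g z = (z - x) ^ m * h z := by
        filter_upwards [hl hev, hl (hxne)] with z hz hzx
        rw [hz, smul_eq_mul, ← mul_assoc, ← zpow_natCast, hmn, ← zpow_add₀ (sub_ne_zero.mpr hzx)]
        simp
      have h2 : Tendsto (fun z => (z - x) ^ m * h z) l (𝓝 ((x - x) ^ m * c)) := by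
        refine Tendsto.mul ?_ hc
        exact (((continuous_id.sub continuous_const).pow _).continuousAt).mono_left
          (hl.trans nhdsWithin_le_nhds)
      have h3 : Tendsto g l (𝓝 ((x - x) ^ m * c)) := Tendsto.congr' (by
        filter_upwards [hevl] with z hz using hz.symm) h2
      have h4 : Tendsto g l (𝓝 (g x)) :=
        hg.continuousAt.mono_left (hl.trans nhdsWithin_le_nhds)
      have : g x = (x - x) ^ m * c := tendsto_nhds_unique h4 h3
      apply hgx
      rw [this, sub_self, zero_pow hm0.ne', zero_mul]



noncomputable def C1 : ℝ := ∑' n : ℕ, ((n:ℝ) + 1) ^ (-(3/2) : ℝ)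

lemma summable_shift (p : ℝ) (hp : p < -1) :
    Summable (fun n : ℕ => ((n:ℝ) + 1) ^ p) := by
  have h := (Real.summable_nat_rpow (p := p)).mpr hp
  have := (summable_nat_add_iff (f := fun n : ℕ => (n:ℝ) ^ p) 1).mpr h
  exact this.congr (fun n => by push_cast; ring)

lemma C1_summable : Summable (fun n : ℕ => ((n:ℝ) + 1) ^ (-(3/2) : ℝ)) :=
  summable_shift _ (by norm_num)

lemma integral_pow_Ioi {σ : ℝ} (hσ : 1/2 < σ) :
    ∫ y in Ioi (1:ℝ), y ^ (1 - 4*σ) = 1 / (4*σ - 2) := by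
  rw [integral_Ioi_rpow_of_lt (by linarith) one_pos]
  rw [Real.one_rpow]
  rw [show (1 - 4*σ + 1) = -(4*σ - 2) by ring]
  rw [div_neg, neg_div, neg_neg, one_div]

theorem realMain {S : ℝ → ℝ}
    (hS : ∀ σ ∈ Ioc (1/2:ℝ) (3/4), HasSum
      (fun p : ℕ × ℕ => f σ ((p.1:ℝ) + 1) ((p.2:ℝ) + 1)) (S σ)) :
    Tendsto (fun σ => (σ - 1/2) * S σ) (𝓝[>] (1/2:ℝ))
      (𝓝 (Real.Gamma (1/4) ^ 2 / (8 * Real.sqrt (2 * Real.pi)))) := by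
  have hδ : Tendsto (fun σ : ℝ => σ - 1/2) (𝓝[>] (1/2:ℝ)) (𝓝 0) := by
    have : Tendsto (fun σ : ℝ => σ - 1/2) (𝓝 (1/2:ℝ)) (𝓝 (1/2 - 1/2)) :=
      (continuous_id.sub continuous_const).tendsto _
    rw [sub_self] at this
    exact this.mono_left nhdsWithin_le_nhds
  have hlow : Tendsto (fun σ => J σ / 4 - (σ - 1/2) * (4 * C1)) (𝓝[>] (1/2:ℝ))
      (𝓝 (J (1/2) / 4)) := by
    have := (J_tendsto.div_const 4).sub (hδ.mul_const (4 * C1))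
    simpa using this
  have hup : Tendsto (fun σ => J σ / 4 + (σ - 1/2) * (C1 + J σ)) (𝓝[>] (1/2:ℝ))
      (𝓝 (J (1/2) / 4)) := by
    have h1 : Tendsto (fun σ => C1 + J σ) (𝓝[>] (1/2:ℝ)) (𝓝 (C1 + J (1/2))) :=
      (tendsto_const_nhds (x := C1)).add J_tendsto
    have := (J_tendsto.div_const 4).add (hδ.mul h1)
    simpa using this
  have htarget : J (1/2) / 4 = Real.Gamma (1/4) ^ 2 / (8 * Real.sqrt (2 * Real.pi)) := by
    rw [J_half, div_div]
    rw [Real.sqrt_mul (by norm_num : (0:ℝ) ≤ 2)]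
    ring
  rw [← htarget]
  have hmem : ∀ᶠ σ in 𝓝[>] (1/2:ℝ), σ ∈ Ioc (1/2:ℝ) (3/4) :=
    Ioc_mem_nhdsGT (by norm_num)
  apply tendsto_of_tendsto_of_tendsto_of_le_of_le' hlow hup
  · -- lower bound
    filter_upwards [hmem] with σ hσ
    obtain ⟨hσl, hσr⟩ := hσ
    have hσIcc : σ ∈ Icc (1/2:ℝ) (3/4) := ⟨hσl.le, hσr⟩
    have hσ0 : (0:ℝ) ≤ σ := by linarith
    have hδ0 : 0 < σ - 1/2 := by linarith
    have hFsum := (hS σ ⟨hσl, hσr⟩)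
    have hG : HasSum (fun p : ℕ × ℕ => f σ ((p.2:ℝ) + 1) ((p.1:ℝ) + 1)) (S σ) := by
      have := (Equiv.prodComm ℕ ℕ).hasSum_iff
        (f := fun p : ℕ × ℕ => f σ ((p.1:ℝ) + 1) ((p.2:ℝ) + 1)) (a := S σ)
      exact this.mpr hFsum
    have hrow_sum : ∀ n : ℕ, Summable (fun m : ℕ => f σ ((m:ℝ) + 1) ((n:ℝ) + 1)) :=
      fun n => hG.summable.prod_factor n
    have hS2 : HasSum (fun n : ℕ => ∑' m : ℕ, f σ ((m:ℝ) + 1) ((n:ℝ) + 1)) (S σ) :=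
      hG.prod_fiberwise (fun n => (hrow_sum n).hasSum)
    have hrow_low : ∀ n : ℕ, ((n:ℝ)+1) ^ (1 - 4*σ) * J σ - 4 * ((n:ℝ)+1) ^ (-(3/2):ℝ)
        ≤ ∑' m : ℕ, f σ ((m:ℝ) + 1) ((n:ℝ) + 1) := by
      intro n
      set b : ℝ := (n:ℝ) + 1 with hbdef
      have hb1 : (1:ℝ) ≤ b := by rw [hbdef]; linarith [Nat.cast_nonneg (α := ℝ) n]
      have hb0 : (0:ℝ) < b := by linarith
      have hint0 : IntegrableOn (fun x => f σ x b) (Ioi (0:ℝ)) := f_integrableOn hσIcc hb0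
      have h1 : ∫ x in Ioi (1:ℝ), f σ x b ≤ ∑' m : ℕ, f σ ((m:ℝ) + 1) b := by
        apply integral_le_tsum (f_anti hσ0 hb0)
          (fun x hx => f_nonneg (by linarith [mem_Ici.mp hx]) hb0.le)
          (hint0.mono_set (Ioi_subset_Ioi zero_le_one))
        exact hrow_sum n
      refine le_trans ?_ h1
      have hsplit : ∫ x in Ioi (0:ℝ), f σ x b =
          (∫ x in Ioc (0:ℝ) 1, f σ x b) + ∫ x in Ioi (1:ℝ), f σ x b := by
        rw [← setIntegral_union (Ioc_disjoint_Ioi le_rfl) measurableSet_Ioi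
          (hint0.mono_set Ioc_subset_Ioi_self)
          (hint0.mono_set (Ioi_subset_Ioi zero_le_one))]
        rw [Set.Ioc_union_Ioi_eq_Ioi zero_le_one]
      have hE := e_bound hσIcc hb1
      have hI := integral_f (σ := σ) (b := b) hb0
      linarith
    have hsum_pow : Summable (fun n : ℕ => ((n:ℝ)+1) ^ (1 - 4*σ)) :=
      summable_shift _ (by linarith)
    have hsum_low : Summable (fun n : ℕ =>
        ((n:ℝ)+1) ^ (1 - 4*σ) * J σ - 4 * ((n:ℝ)+1) ^ (-(3/2):ℝ)) :=
      (hsum_pow.mul_right _).sub (C1_summable.mul_left 4)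
    have hSlow : (∑' n : ℕ, (((n:ℝ)+1) ^ (1 - 4*σ) * J σ - 4 * ((n:ℝ)+1) ^ (-(3/2):ℝ)))
        ≤ S σ := by
      rw [← hS2.tsum_eq]
      exact Summable.tsum_le_tsum hrow_low hsum_low hS2.summable
    rw [Summable.tsum_sub (hsum_pow.mul_right _) (C1_summable.mul_left 4), tsum_mul_right,
      tsum_mul_left] at hSlow
    have hT : 1 / (4*σ - 2) ≤ ∑' n : ℕ, ((n:ℝ)+1) ^ (1 - 4*σ) := by
      rw [← integral_pow_Ioi hσl]
      exact integral_le_tsum (rpow_const_anti (by linarith))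
        (fun x hx => Real.rpow_nonneg (by linarith [mem_Ici.mp hx]) _)
        (integrableOn_Ioi_rpow_of_lt (by linarith) one_pos) hsum_pow
    have hS_ge : 1 / (4*σ - 2) * J σ - 4 * C1 ≤ S σ := by
      have := mul_le_mul_of_nonneg_right hT (J_nonneg σ)
      unfold C1
      linarith
    have hne : (4*σ - 2) ≠ 0 := by linarith
    have hkey : (σ - 1/2) * (1 / (4*σ - 2) * J σ) = J σ / 4 := by
      rw [show σ - 1/2 = (4*σ-2)/4 by ring, one_div, div_mul_eq_mul_div, ← mul_assoc,
        mul_inv_cancel₀ hne, one_mul]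
    nlinarith [mul_le_mul_of_nonneg_left hS_ge hδ0.le, hkey]
  · -- upper bound
    filter_upwards [hmem] with σ hσ
    obtain ⟨hσl, hσr⟩ := hσ
    have hσIcc : σ ∈ Icc (1/2:ℝ) (3/4) := ⟨hσl.le, hσr⟩
    have hσ0 : (0:ℝ) ≤ σ := by linarith
    have hδ0 : 0 < σ - 1/2 := by linarith
    have hFsum := (hS σ ⟨hσl, hσr⟩)
    have hG : HasSum (fun p : ℕ × ℕ => f σ ((p.2:ℝ) + 1) ((p.1:ℝ) + 1)) (S σ) := by
      have := (Equiv.prodComm ℕ ℕ).hasSum_iff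
        (f := fun p : ℕ × ℕ => f σ ((p.1:ℝ) + 1) ((p.2:ℝ) + 1)) (a := S σ)
      exact this.mpr hFsum
    have hrow_sum : ∀ n : ℕ, Summable (fun m : ℕ => f σ ((m:ℝ) + 1) ((n:ℝ) + 1)) :=
      fun n => hG.summable.prod_factor n
    have hS2 : HasSum (fun n : ℕ => ∑' m : ℕ, f σ ((m:ℝ) + 1) ((n:ℝ) + 1)) (S σ) :=
      hG.prod_fiberwise (fun n => (hrow_sum n).hasSum)
    have hsum_pow : Summable (fun n : ℕ => ((n:ℝ)+1) ^ (1 - 4*σ)) :=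
      summable_shift _ (by linarith)
    have hrow_up : ∀ n : ℕ, (∑' m : ℕ, f σ ((m:ℝ) + 1) ((n:ℝ) + 1))
        ≤ ((n:ℝ)+1) ^ (-(3/2):ℝ) + ((n:ℝ)+1) ^ (1 - 4*σ) * J σ := by
      intro n
      set b : ℝ := (n:ℝ) + 1 with hbdef
      have hb1 : (1:ℝ) ≤ b := by rw [hbdef]; linarith [Nat.cast_nonneg (α := ℝ) n]
      have hb0 : (0:ℝ) < b := by linarith
      have hint0 : IntegrableOn (fun x => f σ x b) (Ioi (0:ℝ)) := f_integrableOn hσIcc hb0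
      rw [Summable.tsum_eq_zero_add (hrow_sum n)]
      have hfirst : f σ (((0:ℕ):ℝ) + 1) b ≤ b ^ (-(3/2):ℝ) := by
        have := f_le_of_small hσIcc one_pos hb1
        rw [Real.one_rpow, one_mul] at this
        simpa using this
      have htail : (∑' m : ℕ, f σ ((((m+1):ℕ):ℝ) + 1) b) ≤ b ^ (1 - 4*σ) * J σ := by
        have heq : (fun m : ℕ => f σ ((((m+1):ℕ):ℝ) + 1) b)
            = (fun m : ℕ => f σ ((m:ℝ) + 2) b) := by
          funext m; push_cast; ring_nf
        rw [heq]
        have h1 : (∑' m : ℕ, f σ ((m:ℝ) + 2) b) ≤ ∫ x in Ioi (1:ℝ), f σ x b :=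
          tsum_le_integral (f_anti hσ0 hb0)
            (fun x hx => f_nonneg (by linarith [mem_Ici.mp hx]) hb0.le)
            (hint0.mono_set (Ioi_subset_Ioi zero_le_one))
        refine h1.trans ?_
        have h2 : ∫ x in Ioi (1:ℝ), f σ x b ≤ ∫ x in Ioi (0:ℝ), f σ x b := by
          apply setIntegral_mono_set hint0
          · filter_upwards [ae_restrict_mem measurableSet_Ioi] with x hx using
              f_nonneg (le_of_lt hx) hb0.le
          · exact HasSubset.Subset.eventuallyLE (Ioi_subset_Ioi zero_le_one)
        rw [integral_f hb0] at h2
        exact h2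
      exact add_le_add hfirst htail
    have hsum_up : Summable (fun n : ℕ =>
        ((n:ℝ)+1) ^ (-(3/2):ℝ) + ((n:ℝ)+1) ^ (1 - 4*σ) * J σ) :=
      C1_summable.add (hsum_pow.mul_right _)
    have hSup : S σ ≤ ∑' n : ℕ,
        (((n:ℝ)+1) ^ (-(3/2):ℝ) + ((n:ℝ)+1) ^ (1 - 4*σ) * J σ) := by
      rw [← hS2.tsum_eq]
      exact Summable.tsum_le_tsum hrow_up hS2.summable hsum_up
    rw [Summable.tsum_add C1_summable (hsum_pow.mul_right _), tsum_mul_right] at hSup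
    have hT : (∑' n : ℕ, ((n:ℝ)+1) ^ (1 - 4*σ)) ≤ 1 + 1 / (4*σ - 2) := by
      rw [Summable.tsum_eq_zero_add hsum_pow]
      have h0 : (((0:ℕ):ℝ) + 1) ^ (1 - 4*σ) = 1 := by
        norm_num
      rw [h0]
      have heq : (fun m : ℕ => ((((m+1):ℕ):ℝ) + 1) ^ (1 - 4*σ))
          = (fun m : ℕ => ((m:ℝ) + 2) ^ (1 - 4*σ)) := by
        funext m; push_cast; ring_nf
      rw [heq, ← integral_pow_Ioi hσl]
      have := tsum_le_integral (u := fun y : ℝ => y ^ (1 - 4*σ))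
        (rpow_const_anti (by linarith))
        (fun x hx => Real.rpow_nonneg (by linarith [mem_Ici.mp hx]) _)
        (integrableOn_Ioi_rpow_of_lt (by linarith) one_pos)
      linarith
    have hS_le : S σ ≤ C1 + (1 + 1 / (4*σ - 2)) * J σ := by
      have := mul_le_mul_of_nonneg_right hT (J_nonneg σ)
      unfold C1
      linarith
    have hne : (4*σ - 2) ≠ 0 := by linarith
    have hkey : (σ - 1/2) * (1 / (4*σ - 2) * J σ) = J σ / 4 := by
      rw [show σ - 1/2 = (4*σ-2)/4 by ring, one_div, div_mul_eq_mul_div, ← mul_assoc,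
        mul_inv_cancel₀ hne, one_mul]
    nlinarith [mul_le_mul_of_nonneg_left hS_le hδ0.le, hkey]



lemma term_eq {σ : ℝ} (p : ℕ × ℕ) :
    1 / (((p.1 : ℂ) + 1) ^ (σ:ℂ) * ((p.2 : ℂ) + 1) ^ (σ:ℂ) *
        (((p.1 : ℂ) + 1) + ((p.2 : ℂ) + 1)) ^ (σ:ℂ) *
        (((p.1 : ℂ) + 1) + 2 * ((p.2 : ℂ) + 1)) ^ (σ:ℂ))
      = ((f σ ((p.1:ℝ) + 1) ((p.2:ℝ) + 1) : ℝ) : ℂ) := by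
  set m : ℝ := (p.1:ℝ) + 1 with hm
  set n : ℝ := (p.2:ℝ) + 1 with hn
  have hm0 : 0 ≤ m := by rw [hm]; positivity
  have hn0 : 0 ≤ n := by rw [hn]; positivity
  have hmn : 0 ≤ m + n := by linarith
  have hm2n : 0 ≤ m + 2 * n := by linarith
  have hreal : f σ m n = (m ^ σ * n ^ σ * (m + n) ^ σ * (m + 2*n) ^ σ)⁻¹ := by
    rw [f, Real.rpow_neg (by positivity), Real.mul_rpow (by positivity) hm2n,
      Real.mul_rpow (by positivity) hmn, Real.mul_rpow hm0 hn0]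
  have hc1 : ((p.1 : ℂ) + 1) = ((m : ℝ) : ℂ) := by rw [hm]; push_cast; ring
  have hc2 : ((p.2 : ℂ) + 1) = ((n : ℝ) : ℂ) := by rw [hn]; push_cast; ring
  rw [hc1, hc2, ← Complex.ofReal_add, show ((2:ℂ) * (n:ℝ)) = (((2 * n : ℝ)):ℂ) by push_cast; ring,
    ← Complex.ofReal_add]
  rw [← Complex.ofReal_cpow hm0, ← Complex.ofReal_cpow hn0, ← Complex.ofReal_cpow hmn,
    ← Complex.ofReal_cpow (by rwa [show m + (2*n) = m + 2*n by ring])]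
  rw [← Complex.ofReal_mul, ← Complex.ofReal_mul, ← Complex.ofReal_mul]
  rw [hreal, one_div, ← Complex.ofReal_inv]

lemma Z_real {Z : ℂ → ℂ}
    (hZeq : ∀ s : ℂ, (1 : ℝ) / 2 < s.re →
      HasSum (fun p : ℕ × ℕ =>
        1 / (((p.1 : ℂ) + 1) ^ s * ((p.2 : ℂ) + 1) ^ s *
          (((p.1 : ℂ) + 1) + ((p.2 : ℂ) + 1)) ^ s *
          (((p.1 : ℂ) + 1) + 2 * ((p.2 : ℂ) + 1)) ^ s)) (Z s))
    {σ : ℝ} (hσ : 1/2 < σ) :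
    HasSum (fun p : ℕ × ℕ => f σ ((p.1:ℝ) + 1) ((p.2:ℝ) + 1)) ((Z (σ:ℂ)).re)
      ∧ Z (σ:ℂ) = (((Z (σ:ℂ)).re : ℝ) : ℂ) := by
  have h1 := hZeq (σ:ℂ) (by rwa [Complex.ofReal_re])
  rw [show (fun p : ℕ × ℕ =>
        1 / (((p.1 : ℂ) + 1) ^ (σ:ℂ) * ((p.2 : ℂ) + 1) ^ (σ:ℂ) *
          (((p.1 : ℂ) + 1) + ((p.2 : ℂ) + 1)) ^ (σ:ℂ) *
          (((p.1 : ℂ) + 1) + 2 * ((p.2 : ℂ) + 1)) ^ (σ:ℂ)))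
      = (fun p : ℕ × ℕ => ((f σ ((p.1:ℝ) + 1) ((p.2:ℝ) + 1) : ℝ) : ℂ))
    from funext (fun p => term_eq p)] at h1
  have hre : HasSum (fun p : ℕ × ℕ => f σ ((p.1:ℝ) + 1) ((p.2:ℝ) + 1)) ((Z (σ:ℂ)).re) := by
    have := Complex.reCLM.hasSum h1
    simpa using this
  refine ⟨hre, ?_⟩
  have h2 : HasSum (fun p : ℕ × ℕ => ((f σ ((p.1:ℝ) + 1) ((p.2:ℝ) + 1) : ℝ) : ℂ))
      (((Z (σ:ℂ)).re : ℝ) : ℂ) := Complex.ofRealCLM.hasSum hre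
  exact h1.unique h2


end Stmt8Aux


open Stmt8Aux in
/-- Any meromorphic continuation of `ω_B` has a simple pole at `s = 1/2`
with residue `Γ(1/4)² / (8 √(2π))`. -/
theorem stmt8 (Z : ℂ → ℂ) (hZ : ∀ s : ℂ, MeromorphicAt Z s)
    (hZeq : ∀ s : ℂ, (1 : ℝ) / 2 < s.re →
      HasSum (fun p : ℕ × ℕ =>
        1 / (((p.1 : ℂ) + 1) ^ s * ((p.2 : ℂ) + 1) ^ s *
          (((p.1 : ℂ) + 1) + ((p.2 : ℂ) + 1)) ^ s *
          (((p.1 : ℂ) + 1) + 2 * ((p.2 : ℂ) + 1)) ^ s)) (Z s)) :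
    Tendsto (fun s : ℂ => (s - 1 / 2) * Z s) (𝓝[≠] (1 / 2 : ℂ))
      (𝓝 ((Real.Gamma (1 / 4) ^ 2 / (8 * Real.sqrt (2 * Real.pi)) : ℝ) : ℂ)) := by
  set c : ℝ := Real.Gamma (1 / 4) ^ 2 / (8 * Real.sqrt (2 * Real.pi)) with hc
  -- the real-variable limit
  have hrm : Tendsto (fun σ : ℝ => (σ - 1/2) * ((Z (σ:ℂ)).re)) (𝓝[>] (1/2:ℝ)) (𝓝 c) := by
    apply realMain
    intro σ hσ
    exact (Z_real hZeq hσ.1).1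
  -- meromorphy of the rescaled function
  have hmer : MeromorphicAt (fun s : ℂ => (s - 1/2) * Z s) (1/2 : ℂ) := by
    have h1 : MeromorphicAt (fun s : ℂ => s - 1/2) (1/2 : ℂ) :=
      (MeromorphicAt.id (1/2:ℂ)).sub (MeromorphicAt.const _ _)
    exact h1.mul (hZ _)
  -- the approach filter along the real axis
  have hl : Tendsto (fun σ : ℝ => (σ:ℂ)) (𝓝[>] (1/2:ℝ)) (𝓝[≠] (1/2:ℂ)) := by
    apply tendsto_nhdsWithin_of_tendsto_nhds_of_eventually_within
    · have := (Complex.continuous_ofReal.tendsto ((1/2:ℝ))).mono_left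
        (nhdsWithin_le_nhds (s := Ioi (1/2:ℝ)))
      simpa using this
    · filter_upwards [self_mem_nhdsWithin] with σ hσ
      simp only [mem_Ioi] at hσ
      simp only [mem_compl_iff, mem_singleton_iff]
      intro hbad
      have : σ = ((1:ℂ)/2).re := by rw [← hbad, Complex.ofReal_re]
      norm_num at this
      linarith
  have hne : (Filter.map (fun σ : ℝ => (σ:ℂ)) (𝓝[>] (1/2:ℝ))).NeBot :=
    Filter.map_neBot
  have hll : Filter.map (fun σ : ℝ => (σ:ℂ)) (𝓝[>] (1/2:ℝ)) ≤ 𝓝[≠] (1/2:ℂ) := hl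
  -- convergence along the real filter
  have hcv : Tendsto (fun s : ℂ => (s - 1/2) * Z s)
      (Filter.map (fun σ : ℝ => (σ:ℂ)) (𝓝[>] (1/2:ℝ))) (𝓝 (c:ℂ)) := by
    rw [Filter.tendsto_map'_iff]
    have heq : ∀ᶠ σ : ℝ in 𝓝[>] (1/2:ℝ),
        (((σ - 1/2) * ((Z (σ:ℂ)).re) : ℝ) : ℂ) = ((σ:ℂ) - 1/2) * Z (σ:ℂ) := by
      filter_upwards [self_mem_nhdsWithin] with σ hσ
      simp only [mem_Ioi] at hσ
      calc (((σ - 1/2) * ((Z (σ:ℂ)).re) : ℝ) : ℂ)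
          = ((σ:ℂ) - 1/2) * (((Z (σ:ℂ)).re : ℝ) : ℂ) := by push_cast; ring
        _ = ((σ:ℂ) - 1/2) * Z (σ:ℂ) := by rw [← (Z_real hZeq hσ).2]
    refine Tendsto.congr' heq ?_
    exact (Complex.continuous_ofReal.tendsto c).comp hrm
  exact bridge hmer (hne := hne) hll hcv
end

section
/- For every complex number u with −1/2 < Re(u) < 1/6, one has ∫_0^∞ (x(1+x)(1+2x))^{2u} · ((1+3x)(2+3x))^{−2u−2/3} dx = 3^{−3u−3/2} · Γ(1/6 − u) · Γ(u + 1/2) / (2^{2/3} · Γ(2/3)). In particular (taking u = −1/6), ∫_0^∞ (x(1+x)(1+2x)(1+3x)(2+3x))^{−1/3} dx = Γ(1/3)³ / (2^{5/3} · √3 · π). -/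
open Complex MeasureTheory

open Set Filter


noncomputable def Fs (x : ℝ) : ℝ := 27*(x*(1+x)*(1+2*x))^2/(4*(1+3*x+3*x^2)^3)
noncomputable def Fs' (x : ℝ) : ℝ := 27*(x*(1+x)*(1+2*x))*((1+3*x)*(2+3*x))/(4*(1+3*x+3*x^2)^4)

lemma hRpos (x : ℝ) : (0:ℝ) < 1+3*x+3*x^2 := by nlinarith [sq_nonneg (x+1/2), sq_nonneg x]

lemma key (x : ℝ) : 4*(1+3*x+3*x^2)^3 = ((1+3*x)*(2+3*x))^2 + 27*(x*(1+x)*(1+2*x))^2 := by ring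

lemma hFderiv (x : ℝ) : HasDerivAt Fs (Fs' x) x := by
  have hd : (4*(1+3*x+3*x^2)^3 : ℝ) ≠ 0 := by have := hRpos x; positivity
  have h1 : HasDerivAt (fun x : ℝ => 27*(x*(1+x)*(1+2*x))^2)
      (27*(2*(x*(1+x)*(1+2*x))*(1+6*x+6*x^2))) x := by
    have : HasDerivAt (fun x : ℝ => x*(1+x)*(1+2*x)) (1+6*x+6*x^2) x := by
      have := ((hasDerivAt_id x).mul ((hasDerivAt_const x (1:ℝ)).add (hasDerivAt_id x))).mul
        (((hasDerivAt_const x (1:ℝ)).add ((hasDerivAt_const x (2:ℝ)).mul (hasDerivAt_id x))))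
      convert this using 1
      · rfl
      · rfl
      · funext y; simp only [Pi.mul_apply, Pi.add_apply, id]
      · simp only [Pi.mul_apply, Pi.add_apply, id]; norm_num; ring
    simpa using ((this.pow 2).const_mul (27:ℝ))
  have h2 : HasDerivAt (fun x : ℝ => 4*(1+3*x+3*x^2)^3)
      (4*(3*(1+3*x+3*x^2)^2*(3+6*x))) x := by
    have : HasDerivAt (fun x : ℝ => 1+3*x+3*x^2) (3+6*x) x := by
      have := ((hasDerivAt_const x (1:ℝ)).add ((hasDerivAt_const x (3:ℝ)).mul (hasDerivAt_id x))).add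
        ((hasDerivAt_const x (3:ℝ)).mul (hasDerivAt_pow 2 x))
      convert this using 1
      · rfl
      · rfl
      · funext y; simp only [Pi.mul_apply, Pi.add_apply, id]
      · simp only [Pi.mul_apply, Pi.add_apply, id]; norm_num; ring
    simpa [mul_comm, mul_assoc, mul_left_comm] using ((this.pow 3).const_mul (4:ℝ))
  have := h1.div h2 hd
  convert this using 1
  · rfl
  · rfl
  · rfl
  unfold Fs'
  have hr := hRpos x
  field_simp
  ring

lemma hFs'pos {x : ℝ} (hx : 0 < x) : 0 < Fs' x := by
  have := hRpos x; unfold Fs'; positivity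

lemma hFcont : Continuous Fs := by
  apply Continuous.div (by fun_prop) (by fun_prop)
  intro x; have := hRpos x; positivity

lemma hFmono : StrictMonoOn Fs (Ici 0) := by
  refine strictMonoOn_of_deriv_pos (convex_Ici 0) hFcont.continuousOn ?_
  intro x hx
  rw [interior_Ici] at hx
  rw [(hFderiv x).deriv]
  exact hFs'pos hx

lemma hFimg : Fs '' (Ioi 0) = Ioo 0 1 := by
  apply Subset.antisymm
  · rintro y ⟨x, hx, rfl⟩
    rw [mem_Ioi] at hx
    have hr := hRpos x
    have hq : (0:ℝ) < (1+3*x)*(2+3*x) := by nlinarith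
    constructor
    · unfold Fs; positivity
    · unfold Fs
      rw [div_lt_one (by positivity)]
      nlinarith [key x]
  · have h0 : Tendsto Fs (nhdsWithin 0 (Ioi 0)) (nhds 0) := by
      have : Fs 0 = 0 := by unfold Fs; norm_num
      simpa [this] using (hFcont.tendsto 0).mono_left nhdsWithin_le_nhds
    have htop : Tendsto Fs atTop (nhds 1) := by
      have heq : ∀ x : ℝ, Fs x = 1 - ((1+3*x)*(2+3*x))^2/(4*(1+3*x+3*x^2)^3) := by
        intro x
        have hr := hRpos x
        unfold Fs
        rw [eq_sub_iff_add_eq, ← add_div, div_eq_one_iff_eq (by positivity)]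
        ring
      have hz : Tendsto (fun x : ℝ => ((1+3*x)*(2+3*x))^2/(4*(1+3*x+3*x^2)^3)) atTop (nhds 0) := by
        apply squeeze_zero' (g := fun x : ℝ => 4 / x^2)
        · filter_upwards [eventually_ge_atTop (1:ℝ)] with x hx
          have hr := hRpos x
          positivity
        · filter_upwards [eventually_ge_atTop (1:ℝ)] with x hx
          rw [div_le_div_iff₀ (by have := hRpos x; positivity) (by positivity)]
          have hq0 : (0:ℝ) ≤ (1+3*x)*(2+3*x) := by nlinarith
          have h1 : (1+3*x)*(2+3*x) ≤ 20*x^2 := by nlinarith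
          have h3 : ((1+3*x)*(2+3*x))^2 ≤ 400*x^4 := by nlinarith
          have h2 : 3*x^2 ≤ 1+3*x+3*x^2 := by nlinarith
          have h4 := pow_le_pow_left₀ (by positivity : (0:ℝ) ≤ 3*x^2) h2 3
          have h5 := mul_le_mul_of_nonneg_right h3 (sq_nonneg x)
          nlinarith [h4, h5, pow_pos (lt_of_lt_of_le one_pos hx) 6]
        · exact tendsto_const_nhds.div_atTop (tendsto_pow_atTop two_ne_zero)
      have := hz.const_sub 1
      simp only [sub_zero] at this
      exact this.congr (fun x => (heq x).symm)
    have hsub : Ioo (0:ℝ) 1 ⊆ Fs '' (Ioi 0) := by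
      refine (isPreconnected_Ioi).intermediate_value_Ioo ?_ ?_
        (hFcont.continuousOn) h0 htop
      · exact le_principal_iff.mpr self_mem_nhdsWithin
      · exact le_principal_iff.mpr (Ioi_mem_atTop 0)
    exact hsub

lemma cpow_exp_log {a : ℝ} (ha : 0 < a) (w : ℂ) :
    (a:ℂ) ^ w = Complex.exp (w * (Real.log a : ℂ)) := by
  rw [Complex.cpow_def_of_ne_zero (by exact_mod_cast ha.ne'), ← Complex.ofReal_log ha.le,
    mul_comm]

lemma ofReal_eq_exp {a : ℝ} (ha : 0 < a) : (a:ℂ) = Complex.exp ((Real.log a : ℝ):ℂ) := by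
  rw [← Complex.ofReal_exp, Real.exp_log ha]

lemma pointwise (u : ℂ) {x : ℝ} (hx : 0 < x) :
    ((x*(1+x)*(1+2*x) : ℝ):ℂ)^(2*u) * (((1+3*x)*(2+3*x) : ℝ):ℂ)^(-2*u - 2/3)
    = (3:ℂ)^(-3*u-3/2) / (2:ℂ)^((2:ℂ)/3) *
      (|Fs' x| • (((Fs x : ℝ):ℂ)^((u+1/2) - 1) * ((1:ℂ) - ((Fs x : ℝ):ℂ))^((1/6 - u) - 1))) := by
  have hp : (0:ℝ) < x*(1+x)*(1+2*x) := by
    apply mul_pos (mul_pos hx (by linarith)) (by linarith)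
  have hq : (0:ℝ) < (1+3*x)*(2+3*x) := mul_pos (by linarith) (by linarith)
  have hr := hRpos x
  have hd : (4*(1+3*x+3*x^2)^3:ℝ) ≠ 0 := by positivity
  have h1F : (1:ℝ) - Fs x = ((1+3*x)*(2+3*x))^2/(4*(1+3*x+3*x^2)^3) := by
    unfold Fs; field_simp; ring
  have hcast : (1:ℂ) - ((Fs x : ℝ):ℂ) = (((1:ℝ) - Fs x : ℝ):ℂ) := by push_cast; ring
  have hFx : (0:ℝ) < 27*(x*(1+x)*(1+2*x))^2/(4*(1+3*x+3*x^2)^3) := by positivity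
  have h1Fx : (0:ℝ) < ((1+3*x)*(2+3*x))^2/(4*(1+3*x+3*x^2)^3) := by positivity
  have hF'x : (0:ℝ) < Fs' x := hFs'pos hx
  -- real log expansions
  have r1 : Real.log (27*(x*(1+x)*(1+2*x))^2/(4*(1+3*x+3*x^2)^3))
      = 3*Real.log 3 + 2*Real.log (x*(1+x)*(1+2*x))
        - (2*Real.log 2 + 3*Real.log (1+3*x+3*x^2)) := by
    rw [Real.log_div (by positivity) hd, Real.log_mul (show (27:ℝ) ≠ 0 by norm_num) (by positivity),
      Real.log_mul (show (4:ℝ) ≠ 0 by norm_num) (by positivity), Real.log_pow, Real.log_pow,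
      show (27:ℝ) = 3^3 by norm_num, show (4:ℝ) = 2^2 by norm_num, Real.log_pow, Real.log_pow]
    push_cast; ring
  have r2 : Real.log (((1+3*x)*(2+3*x))^2/(4*(1+3*x+3*x^2)^3))
      = 2*Real.log ((1+3*x)*(2+3*x)) - (2*Real.log 2 + 3*Real.log (1+3*x+3*x^2)) := by
    rw [Real.log_div (by positivity) hd, Real.log_mul (show (4:ℝ) ≠ 0 by norm_num) (by positivity),
      Real.log_pow, Real.log_pow, show (4:ℝ) = 2^2 by norm_num, Real.log_pow]
    push_cast; ring
  have r3 : Real.log (Fs' x)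
      = 3*Real.log 3 + Real.log (x*(1+x)*(1+2*x)) + Real.log ((1+3*x)*(2+3*x))
        - (2*Real.log 2 + 4*Real.log (1+3*x+3*x^2)) := by
    have hp' : (x*(1+x)*(1+2*x) : ℝ) ≠ 0 := ne_of_gt hp
    have hq' : ((1+3*x)*(2+3*x) : ℝ) ≠ 0 := ne_of_gt hq
    unfold Fs'
    rw [Real.log_div (by positivity) (by positivity),
      show (27:ℝ)*(x*(1+x)*(1+2*x))*((1+3*x)*(2+3*x))
        = 27 * ((x*(1+x)*(1+2*x))*((1+3*x)*(2+3*x))) by ring,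
      Real.log_mul (show (27:ℝ) ≠ 0 by norm_num) (mul_ne_zero hp' hq'), Real.log_mul hp' hq',
      Real.log_mul (show (4:ℝ) ≠ 0 by norm_num) (by positivity), Real.log_pow,
      show (27:ℝ) = 3^3 by norm_num, show (4:ℝ) = 2^2 by norm_num, Real.log_pow, Real.log_pow]
    push_cast; ring
  rw [hcast, h1F, abs_of_pos hF'x, Complex.real_smul]
  unfold Fs
  rw [cpow_exp_log hp, cpow_exp_log hq, cpow_exp_log hFx, cpow_exp_log h1Fx,
    show (3:ℂ) = ((3:ℝ):ℂ) by norm_num, show (2:ℂ) = ((2:ℝ):ℂ) by norm_num,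
    cpow_exp_log (by norm_num : (0:ℝ) < 3), cpow_exp_log (by norm_num : (0:ℝ) < 2),
    ofReal_eq_exp hF'x]
  rw [← Complex.exp_add, ← Complex.exp_sub, ← Complex.exp_add, ← Complex.exp_add,
    ← Complex.exp_add]
  congr 1
  rw [r1, r2, r3]
  push_cast
  ring

lemma hGammaNe : Complex.Gamma (2/3 : ℂ) ≠ 0 := by
  apply Complex.Gamma_ne_zero
  intro m h
  have h2 := congrArg Complex.re h
  rw [show ((2:ℂ)/3) = ((2/3:ℝ):ℂ) by norm_num] at h2
  simp only [Complex.ofReal_re, Complex.neg_re, Complex.natCast_re] at h2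
  have : (0:ℝ) ≤ (m:ℝ) := Nat.cast_nonneg m
  norm_num at h2
  linarith

lemma part1 (u : ℂ) (hu1 : -(1:ℝ)/2 < u.re) (hu2 : u.re < 1/6) :
    (∫ x in Set.Ioi (0:ℝ),
        ((x * (1 + x) * (1 + 2 * x) : ℝ) : ℂ) ^ (2 * u) *
          (((1 + 3 * x) * (2 + 3 * x) : ℝ) : ℂ) ^ (-2 * u - 2 / 3)) =
      (3:ℂ) ^ (-3 * u - 3 / 2) * Complex.Gamma (1/6 - u) * Complex.Gamma (u + 1/2) /
        ((2:ℂ) ^ ((2:ℂ)/3) * Complex.Gamma (2/3)) := by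
  set g : ℝ → ℂ := fun s => (s:ℂ) ^ ((u+1/2) - 1) * (1 - (s:ℂ)) ^ ((1/6-u) - 1) with hg
  have hinj : InjOn Fs (Ioi 0) := (hFmono.mono Ioi_subset_Ici_self).injOn
  have hder : ∀ x ∈ Ioi (0:ℝ), HasDerivWithinAt Fs (Fs' x) (Ioi 0) x :=
    fun x _ => (hFderiv x).hasDerivWithinAt
  have hchg := integral_image_eq_integral_abs_deriv_smul measurableSet_Ioi hder hinj g
  rw [hFimg] at hchg
  have hbeta : Complex.betaIntegral (u+1/2) (1/6-u) = ∫ s in Ioo (0:ℝ) 1, g s := by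
    rw [Complex.betaIntegral, intervalIntegral.integral_of_le zero_le_one,
      integral_Ioc_eq_integral_Ioo]
  have hre1 : (0:ℝ) < (u + 1/2).re := by
    rw [show (1/2:ℂ) = ((1/2:ℝ):ℂ) by norm_num, Complex.add_re, Complex.ofReal_re]
    linarith
  have hre2 : (0:ℝ) < ((1:ℂ)/6 - u).re := by
    rw [show (1/6:ℂ) = ((1/6:ℝ):ℂ) by norm_num, Complex.sub_re, Complex.ofReal_re]
    linarith
  have hGamma := Complex.Gamma_mul_Gamma_eq_betaIntegral hre1 hre2
  rw [show (u + 1/2) + (1/6 - u) = (2/3 : ℂ) by ring] at hGamma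
  have hbval : Complex.betaIntegral (u+1/2) (1/6-u)
      = Complex.Gamma (u+1/2) * Complex.Gamma (1/6-u) / Complex.Gamma (2/3) := by
    rw [eq_div_iff hGammaNe]
    linear_combination -hGamma
  calc ∫ x in Set.Ioi (0:ℝ),
        ((x * (1 + x) * (1 + 2 * x) : ℝ) : ℂ) ^ (2 * u) *
          (((1 + 3 * x) * (2 + 3 * x) : ℝ) : ℂ) ^ (-2 * u - 2 / 3)
      = ∫ x in Set.Ioi (0:ℝ),
          ((3:ℂ)^(-3*u-3/2) / (2:ℂ)^((2:ℂ)/3)) * (|Fs' x| • g (Fs x)) := by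
        refine setIntegral_congr_fun measurableSet_Ioi (fun x hx => ?_)
        exact pointwise u hx
    _ = ((3:ℂ)^(-3*u-3/2) / (2:ℂ)^((2:ℂ)/3)) * ∫ x in Set.Ioi (0:ℝ), |Fs' x| • g (Fs x) :=
        MeasureTheory.integral_const_mul _ _
    _ = ((3:ℂ)^(-3*u-3/2) / (2:ℂ)^((2:ℂ)/3)) * Complex.betaIntegral (u+1/2) (1/6-u) := by
        rw [← hchg, ← hbeta]
    _ = (3:ℂ) ^ (-3 * u - 3 / 2) * Complex.Gamma (1/6 - u) * Complex.Gamma (u + 1/2) /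
        ((2:ℂ) ^ ((2:ℂ)/3) * Complex.Gamma (2/3)) := by
        rw [hbval]; ring

lemma pointwise2 {x : ℝ} (hx : 0 < x) :
    (((x*(1+x)*(1+2*x)*(1+3*x)*(2+3*x))^(-(1:ℝ)/3) : ℝ) : ℂ)
    = ((x*(1+x)*(1+2*x) : ℝ):ℂ)^(2*(-1/6 : ℂ)) *
      (((1+3*x)*(2+3*x) : ℝ):ℂ)^(-2*(-1/6 : ℂ) - 2/3) := by
  have hp : (0:ℝ) < x*(1+x)*(1+2*x) := mul_pos (mul_pos hx (by linarith)) (by linarith)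
  have hq : (0:ℝ) < (1+3*x)*(2+3*x) := mul_pos (by linarith) (by linarith)
  rw [show x*(1+x)*(1+2*x)*(1+3*x)*(2+3*x) = (x*(1+x)*(1+2*x))*((1+3*x)*(2+3*x)) by ring,
    Real.rpow_def_of_pos (mul_pos hp hq), Real.log_mul (ne_of_gt hp) (ne_of_gt hq),
    Complex.ofReal_exp, cpow_exp_log hp, cpow_exp_log hq, ← Complex.exp_add]
  congr 1
  push_cast
  ring

lemma realident : (3:ℝ)⁻¹ * Real.Gamma (1/3) * Real.Gamma (1/3) / ((2:ℝ)^((2:ℝ)/3) * Real.Gamma (2/3))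
    = Real.Gamma (1/3) ^ 3 / ((2:ℝ)^((5:ℝ)/3) * Real.sqrt 3 * Real.pi) := by
  have hs3 : (0:ℝ) < Real.sqrt 3 := Real.sqrt_pos.mpr (by norm_num)
  have hss : Real.sqrt 3 * Real.sqrt 3 = 3 := Real.mul_self_sqrt (by norm_num)
  have hG3 : 0 < Real.Gamma (1/3) := Real.Gamma_pos_of_pos (by norm_num)
  have hG23 : 0 < Real.Gamma (2/3) := Real.Gamma_pos_of_pos (by norm_num)
  have hpi : (0:ℝ) < Real.pi := Real.pi_pos
  have hpw : (0:ℝ) < (2:ℝ)^((2:ℝ)/3) := Real.rpow_pos_of_pos two_pos _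
  have hab : Real.Gamma (1/3) * Real.Gamma (2/3) * Real.sqrt 3 = 2 * Real.pi := by
    have h := Real.Gamma_mul_Gamma_one_sub (1/3)
    rw [show (1:ℝ) - 1/3 = 2/3 by norm_num, show Real.pi * (1/3) = Real.pi/3 by ring,
      Real.sin_pi_div_three] at h
    rw [eq_div_iff (by positivity)] at h
    linarith
  have h2a : (2:ℝ)^((5:ℝ)/3) = (2:ℝ)^((2:ℝ)/3) * 2 := by
    rw [show (5:ℝ)/3 = 2/3 + 1 by norm_num, Real.rpow_add two_pos, Real.rpow_one]
  rw [h2a]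
  rw [div_eq_div_iff (by positivity) (by positivity)]
  linear_combination (-(1/3)*Real.Gamma (1/3)^2*(2:ℝ)^((2:ℝ)/3)*Real.sqrt 3) * hab
    + ((1/3)*Real.Gamma (1/3)^3*Real.Gamma (2/3)*(2:ℝ)^((2:ℝ)/3)) * hss

/-- For `−1/2 < Re(u) < 1/6`,
`∫_0^∞ (x(1+x)(1+2x))^(2u) ((1+3x)(2+3x))^(−2u−2/3) dx
  = 3^(−3u−3/2) Γ(1/6−u) Γ(u+1/2) / (2^(2/3) Γ(2/3))`;
in particular `∫_0^∞ (x(1+x)(1+2x)(1+3x)(2+3x))^(−1/3) dx = Γ(1/3)³/(2^(5/3) √3 π)`. -/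
theorem stmt10 :
    (∀ u : ℂ, -(1 : ℝ) / 2 < u.re → u.re < 1 / 6 →
      (∫ x in Set.Ioi (0 : ℝ),
          ((x * (1 + x) * (1 + 2 * x) : ℝ) : ℂ) ^ (2 * u) *
            (((1 + 3 * x) * (2 + 3 * x) : ℝ) : ℂ) ^ (-2 * u - 2 / 3)) =
        (3 : ℂ) ^ (-3 * u - 3 / 2) * Complex.Gamma (1 / 6 - u) * Complex.Gamma (u + 1 / 2) /
          ((2 : ℂ) ^ ((2 : ℂ) / 3) * Complex.Gamma (2 / 3))) ∧
    (∫ x in Set.Ioi (0 : ℝ),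
        (x * (1 + x) * (1 + 2 * x) * (1 + 3 * x) * (2 + 3 * x)) ^ (-(1 : ℝ) / 3)) =
      Real.Gamma (1 / 3) ^ 3 / ((2 : ℝ) ^ ((5 : ℝ) / 3) * Real.sqrt 3 * Real.pi) := by
  constructor
  · exact part1
  · have hre : ((-1/6 : ℂ)).re = -1/6 := by
      rw [show (-1/6:ℂ) = ((-1/6:ℝ):ℂ) by norm_num, Complex.ofReal_re]
    have h := part1 (-1/6 : ℂ) (by rw [hre]; norm_num) (by rw [hre]; norm_num)
    have hcast : (((∫ x in Set.Ioi (0:ℝ),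
          (x*(1+x)*(1+2*x)*(1+3*x)*(2+3*x))^(-(1:ℝ)/3) : ℝ)) : ℂ)
        = (3 : ℂ) ^ (-3 * (-1/6:ℂ) - 3 / 2) * Complex.Gamma (1 / 6 - (-1/6:ℂ)) *
            Complex.Gamma ((-1/6:ℂ) + 1 / 2) /
          ((2 : ℂ) ^ ((2 : ℂ) / 3) * Complex.Gamma (2 / 3)) := by
      rw [show (((∫ x in Set.Ioi (0:ℝ),
            (x*(1+x)*(1+2*x)*(1+3*x)*(2+3*x))^(-(1:ℝ)/3) : ℝ)) : ℂ)
          = ∫ x in Set.Ioi (0:ℝ),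
            (((x*(1+x)*(1+2*x)*(1+3*x)*(2+3*x))^(-(1:ℝ)/3) : ℝ) : ℂ) from
        (integral_ofReal (𝕜 := ℂ)).symm]
      rw [setIntegral_congr_fun measurableSet_Ioi (fun x hx => pointwise2 hx)]
      exact h
    have hval : (3 : ℂ) ^ (-3 * (-1/6:ℂ) - 3 / 2) * Complex.Gamma (1 / 6 - (-1/6:ℂ)) *
            Complex.Gamma ((-1/6:ℂ) + 1 / 2) /
          ((2 : ℂ) ^ ((2 : ℂ) / 3) * Complex.Gamma (2 / 3))
        = ((Real.Gamma (1/3) ^ 3 / ((2:ℝ)^((5:ℝ)/3) * Real.sqrt 3 * Real.pi) : ℝ) : ℂ) := by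
      rw [show (-3 * (-1/6:ℂ) - 3/2) = -1 by norm_num, Complex.cpow_neg_one,
        show ((1:ℂ)/6 - (-1/6:ℂ)) = ((1/3:ℝ):ℂ) by norm_num,
        show ((-1/6:ℂ) + 1/2) = ((1/3:ℝ):ℂ) by norm_num,
        show ((2:ℂ)/3 : ℂ) = ((2/3:ℝ):ℂ) by norm_num,
        show (2:ℂ) = ((2:ℝ):ℂ) by norm_num,
        show (3:ℂ) = ((3:ℝ):ℂ) by norm_num,
        ← Complex.ofReal_cpow (by norm_num : (0:ℝ) ≤ 2),
        Complex.Gamma_ofReal, Complex.Gamma_ofReal, ← realident]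
      push_cast
      ring
    have := hcast.trans hval
    exact_mod_cast this
end
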